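/- arXiv:1901.10442 — 11 statements merged into one kernel-verified Lean document; each statement's English description precedes it below -/
import Mathlib

section
/- Let W be a set and R a reflexive and symmetric binary relation on W. For subsets a, b ⊆ W define: a C_R b iff there exist x ∈ a and y ∈ b with x R y; a Ĉ_R b iff there exist x ∉ a and y ∉ b with x R y; and a ≪_R b iff there are no x ∈ a and y ∉ b with x R y. Then the bounded distributive lattice of all subsets of W (with operations ∪, ∩ and constants ∅, W) equipped with the relations C_R, Ĉ_R, ≪_R is an EDC-lattice, i.e. all 23 axioms of EDC-lattices hold. -/
universe u

/-- Extended distributive contact lattice (EDC-lattice): a bounded distributive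
lattice with contact `C`, dual contact `Cd` and nontangential part-of `Ll`
satisfying the 23 axioms. -/
structure EDC (D : Type u) [DistribLattice D] [BoundedOrder D] where
  C : D → D → Prop
  Cd : D → D → Prop
  Ll : D → D → Prop
  c1 : ∀ a b, C a b → a ≠ ⊥ ∧ b ≠ ⊥
  c2 : ∀ a a' b b', C a b → a ≤ a' → b ≤ b' → C a' b'
  c3 : ∀ a b c, C a (b ⊔ c) → C a b ∨ C a c
  c4 : ∀ a b, C a b → C b a
  c5 : ∀ a b, a ⊓ b ≠ ⊥ → C a b
  cd1 : ∀ a b, Cd a b → a ≠ ⊤ ∧ b ≠ ⊤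
  cd2 : ∀ a a' b b', Cd a b → a' ≤ a → b' ≤ b → Cd a' b'
  cd3 : ∀ a b c, Cd a (b ⊓ c) → Cd a b ∨ Cd a c
  cd4 : ∀ a b, Cd a b → Cd b a
  cd5 : ∀ a b, a ⊔ b ≠ ⊤ → Cd a b
  ll1 : Ll ⊥ ⊥
  ll2 : Ll ⊤ ⊤
  ll3 : ∀ a b, Ll a b → a ≤ b
  ll4 : ∀ a a' b b', a' ≤ a → Ll a b → b ≤ b' → Ll a' b'
  ll5 : ∀ a b c, Ll a c → Ll b c → Ll (a ⊔ b) c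
  ll6 : ∀ a b c, Ll c a → Ll c b → Ll c (a ⊓ b)
  ll7 : ∀ a b c d, Ll a b → Ll (b ⊓ c) d → Ll c (a ⊔ d) → Ll c d
  mc1 : ∀ a b c, C a b → Ll a c → C a (b ⊓ c)
  mc2 : ∀ a b c d, ¬ C a (b ⊓ c) → C a b → ¬ C (a ⊓ d) b → Cd d c
  mcd1 : ∀ a b c, Cd a b → Ll c a → Cd a (b ⊔ c)
  mcd2 : ∀ a b c d, ¬ Cd a (b ⊔ c) → Cd a b → ¬ Cd (a ⊔ d) b → C d c
  mll1 : ∀ a b c, ¬ Cd a b → Ll (a ⊓ c) b → Ll c b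
  mll2 : ∀ a b c, ¬ C a b → Ll b (a ⊔ c) → Ll b c

/-- A filter of a bounded (distributive) lattice. -/
def EDCFilter {D : Type u} [DistribLattice D] [BoundedOrder D] (F : Set D) : Prop :=
  ⊤ ∈ F ∧ (∀ a b : D, a ∈ F → a ≤ b → b ∈ F) ∧ (∀ a b : D, a ∈ F → b ∈ F → a ⊓ b ∈ F)

/-- An ideal of a bounded (distributive) lattice. -/
def EDCIdeal {D : Type u} [DistribLattice D] [BoundedOrder D] (I : Set D) : Prop :=
  ⊥ ∈ I ∧ (∀ a b : D, a ∈ I → b ≤ a → b ∈ I) ∧ (∀ a b : D, a ∈ I → b ∈ I → a ⊔ b ∈ I)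

/-- A prime filter: a proper filter such that `a ⊔ b ∈ F` implies `a ∈ F` or `b ∈ F`. -/
def PrimeFilter {D : Type u} [DistribLattice D] [BoundedOrder D] (F : Set D) : Prop :=
  EDCFilter F ∧ ⊥ ∉ F ∧ ∀ a b : D, a ⊔ b ∈ F → a ∈ F ∨ b ∈ F

/-- The canonical relation `R^c` between (prime) filters of an EDC-lattice. -/
def Rc {D : Type u} [DistribLattice D] [BoundedOrder D] (E : EDC D) (Γ Δ : Set D) : Prop :=
  ∀ a b : D,
    (a ∈ Γ → b ∈ Δ → E.C a b) ∧
    (a ∉ Γ → b ∉ Δ → E.Cd a b) ∧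
    (a ∈ Γ → b ∉ Δ → ¬ E.Ll a b) ∧
    (a ∉ Γ → b ∈ Δ → ¬ E.Ll b a)

/-- the lattice of all subsets of `W` with the relations `C_R`, `Ĉ_R`, `≪_R`
induced by a reflexive symmetric relation `R` is an EDC-lattice. -/
theorem stmt0 (W : Type u) (R : W → W → Prop)
    (hrefl : ∀ x, R x x) (hsym : ∀ x y, R x y → R y x) :
    ∃ E : EDC (Set W),
      (∀ a b : Set W, E.C a b ↔ ∃ x ∈ a, ∃ y ∈ b, R x y) ∧
      (∀ a b : Set W, E.Cd a b ↔ ∃ x ∉ a, ∃ y ∉ b, R x y) ∧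
      (∀ a b : Set W, E.Ll a b ↔ ¬ ∃ x ∈ a, ∃ y ∉ b, R x y) := by
    refine ⟨{
    C := fun a b => ∃ x ∈ a, ∃ y ∈ b, R x y
    Cd := fun a b => ∃ x ∉ a, ∃ y ∉ b, R x y
    Ll := fun a b => ¬ ∃ x ∈ a, ∃ y ∉ b, R x y
    c1 := by
      rintro a b ⟨x, hx, y, hy, -⟩
      constructor <;> [skip; skip] <;>
        · intro h; subst h; simp at hx hy
    c2 := by
      rintro a a' b b' ⟨x, hx, y, hy, h⟩ ha hb
      exact ⟨x, ha hx, y, hb hy, h⟩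
    c3 := by
      rintro a b c ⟨x, hx, y, hy, h⟩
      rcases hy with hy | hy
      · exact Or.inl ⟨x, hx, y, hy, h⟩
      · exact Or.inr ⟨x, hx, y, hy, h⟩
    c4 := by
      rintro a b ⟨x, hx, y, hy, h⟩
      exact ⟨y, hy, x, hx, hsym _ _ h⟩
    c5 := by
      intro a b h
      rcases Set.nonempty_iff_ne_empty.2 h with ⟨x, hxa, hxb⟩
      exact ⟨x, hxa, x, hxb, hrefl x⟩
    cd1 := by
      rintro a b ⟨x, hx, y, hy, -⟩
      constructor <;>
        · intro h; subst h; simp at hx hy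
    cd2 := by
      rintro a a' b b' ⟨x, hx, y, hy, h⟩ ha hb
      exact ⟨x, fun h' => hx (ha h'), y, fun h' => hy (hb h'), h⟩
    cd3 := by
      rintro a b c ⟨x, hx, y, hy, h⟩
      replace hy : ¬ (y ∈ b ∧ y ∈ c) := hy
      rw [not_and_or] at hy
      rcases hy with hy | hy
      · exact Or.inl ⟨x, hx, y, hy, h⟩
      · exact Or.inr ⟨x, hx, y, hy, h⟩
    cd4 := by
      rintro a b ⟨x, hx, y, hy, h⟩
      exact ⟨y, hy, x, hx, hsym _ _ h⟩
    cd5 := by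
      intro a b h
      have : ∃ x, x ∉ a ∪ b := by
        by_contra hc
        push_neg at hc
        exact h (Set.eq_univ_of_forall hc)
      rcases this with ⟨x, hx⟩
      simp only [Set.mem_union, not_or] at hx
      exact ⟨x, hx.1, x, hx.2, hrefl x⟩
    ll1 := by rintro ⟨x, hx, -⟩; simp at hx
    ll2 := by rintro ⟨x, -, y, hy, -⟩; simp at hy
    ll3 := by
      intro a b h x hx
      by_contra hxb
      exact h ⟨x, hx, x, hxb, hrefl x⟩
    ll4 := by
      rintro a a' b b' ha h hb ⟨x, hx, y, hy, hr⟩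
      exact h ⟨x, ha hx, y, fun h' => hy (hb h'), hr⟩
    ll5 := by
      rintro a b c h1 h2 ⟨x, hx, y, hy, hr⟩
      rcases hx with hx | hx
      · exact h1 ⟨x, hx, y, hy, hr⟩
      · exact h2 ⟨x, hx, y, hy, hr⟩
    ll6 := by
      rintro a b c h1 h2 ⟨x, hx, y, hy, hr⟩
      replace hy : ¬ (y ∈ a ∧ y ∈ b) := hy
      rw [not_and_or] at hy
      rcases hy with hy | hy
      · exact h1 ⟨x, hx, y, hy, hr⟩
      · exact h2 ⟨x, hx, y, hy, hr⟩
    ll7 := by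
      rintro a b c d h1 h2 h3 ⟨x, hx, y, hy, hr⟩
      have hya : y ∈ a := by
        by_contra hya
        exact h3 ⟨x, hx, y, by simp [hya, hy], hr⟩
      have hyb : y ∈ b := by
        by_contra hyb
        exact h1 ⟨y, hya, y, hyb, hrefl y⟩
      have hxb : x ∈ b := by
        by_contra hxb
        exact h1 ⟨y, hya, x, hxb, hsym _ _ hr⟩
      exact h2 ⟨x, ⟨hxb, hx⟩, y, hy, hr⟩
    mc1 := by
      rintro a b c ⟨x, hx, y, hy, hr⟩ h
      have hyc : y ∈ c := by
        by_contra hyc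
        exact h ⟨x, hx, y, hyc, hr⟩
      exact ⟨x, hx, y, ⟨hy, hyc⟩, hr⟩
    mc2 := by
      rintro a b c d h1 ⟨x, hx, y, hy, hr⟩ h2
      have hyc : y ∉ c := fun hyc => h1 ⟨x, hx, y, ⟨hy, hyc⟩, hr⟩
      have hxd : x ∉ d := fun hxd => h2 ⟨x, ⟨hx, hxd⟩, y, hy, hr⟩
      exact ⟨x, hxd, y, hyc, hr⟩
    mcd1 := by
      rintro a b c ⟨x, hx, y, hy, hr⟩ h
      have hyc : y ∉ c := fun hyc => h ⟨y, hyc, x, hx, hsym _ _ hr⟩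
      exact ⟨x, hx, y, by simp [hy, hyc], hr⟩
    mcd2 := by
      rintro a b c d h1 ⟨x, hx, y, hy, hr⟩ h2
      have hyc : y ∈ c := by
        by_contra hyc
        exact h1 ⟨x, hx, y, by simp [hy, hyc], hr⟩
      have hxd : x ∈ d := by
        by_contra hxd
        exact h2 ⟨x, by simp [hx, hxd], y, hy, hr⟩
      exact ⟨x, hxd, y, hyc, hr⟩
    mll1 := by
      rintro a b c h1 h2 ⟨x, hx, y, hy, hr⟩
      by_cases hxa : x ∈ a
      · exact h2 ⟨x, ⟨hxa, hx⟩, y, hy, hr⟩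
      · exact h1 ⟨x, hxa, y, hy, hr⟩
    mll2 := by
      rintro a b c h1 h2 ⟨x, hx, y, hy, hr⟩
      by_cases hya : y ∈ a
      · exact h1 ⟨y, hya, x, hx, hsym _ _ hr⟩
      · exact h2 ⟨x, hx, y, by simp [hya, hy], hr⟩
  }, ?_, ?_, ?_⟩ <;> intro a b <;> rfl
end

section
/- Let D be an EDC-lattice and Γ a prime filter of D. Then: (1) the set {x ∈ D : ∃y ∈ Γ, ¬(x C y)} is an ideal of D; (2) the set {x ∈ D : ∃y ∉ Γ, ¬(x Ĉ y)} is a filter of D; (3) the set {x ∈ D : ∃y ∉ Γ, x ≪ y} is an ideal of D; (4) the set {x ∈ D : ∃y ∈ Γ, y ≪ x} is a filter of D. -/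
universe u

/-- the four sets determined by a prime filter `Γ` are ideals/filters. -/
theorem stmt3 {D : Type u} [DistribLattice D] [BoundedOrder D] (E : EDC D)
    (Γ : Set D) (hΓ : PrimeFilter Γ) :
    EDCIdeal {x : D | ∃ y ∈ Γ, ¬ E.C x y} ∧
    EDCFilter {x : D | ∃ y ∉ Γ, ¬ E.Cd x y} ∧
    EDCIdeal {x : D | ∃ y ∉ Γ, E.Ll x y} ∧
    EDCFilter {x : D | ∃ y ∈ Γ, E.Ll y x} := by
  obtain ⟨⟨htop, hup, hmeet⟩, hbot, hprime⟩ := hΓ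
  refine ⟨⟨⟨⊤, htop, fun h => (E.c1 _ _ h).1 rfl⟩, ?_, ?_⟩,
    ⟨⟨⊥, hbot, fun h => (E.cd1 _ _ h).1 rfl⟩, ?_, ?_⟩,
    ⟨⟨⊥, hbot, E.ll1⟩, ?_, ?_⟩,
    ⟨⟨⊤, htop, E.ll2⟩, ?_, ?_⟩⟩
  · rintro a b ⟨y, hy, hnc⟩ hba
    exact ⟨y, hy, fun h => hnc (E.c2 _ _ _ _ h hba le_rfl)⟩
  · rintro a b ⟨y1, hy1, h1⟩ ⟨y2, hy2, h2⟩
    refine ⟨y1 ⊓ y2, hmeet _ _ hy1 hy2, fun h => ?_⟩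
    rcases E.c3 _ _ _ (E.c4 _ _ h) with h' | h'
    · exact h1 (E.c2 _ _ _ _ (E.c4 _ _ h') le_rfl inf_le_left)
    · exact h2 (E.c2 _ _ _ _ (E.c4 _ _ h') le_rfl inf_le_right)
  · rintro a b ⟨y, hy, hnc⟩ hab
    exact ⟨y, hy, fun h => hnc (E.cd2 _ _ _ _ h hab le_rfl)⟩
  · rintro a b ⟨y1, hy1, h1⟩ ⟨y2, hy2, h2⟩
    refine ⟨y1 ⊔ y2, fun h => (hprime _ _ h).elim hy1 hy2, fun h => ?_⟩
    rcases E.cd3 _ _ _ (E.cd4 _ _ h) with h' | h'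
    · exact h1 (E.cd2 _ _ _ _ (E.cd4 _ _ h') le_rfl le_sup_left)
    · exact h2 (E.cd2 _ _ _ _ (E.cd4 _ _ h') le_rfl le_sup_right)
  · rintro a b ⟨y, hy, hl⟩ hba
    exact ⟨y, hy, E.ll4 _ _ _ _ hba hl le_rfl⟩
  · rintro a b ⟨y1, hy1, h1⟩ ⟨y2, hy2, h2⟩
    exact ⟨y1 ⊔ y2, fun h => (hprime _ _ h).elim hy1 hy2,
      E.ll5 _ _ _ (E.ll4 _ _ _ _ le_rfl h1 le_sup_left)
        (E.ll4 _ _ _ _ le_rfl h2 le_sup_right)⟩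
  · rintro a b ⟨y, hy, hl⟩ hab
    exact ⟨y, hy, E.ll4 _ _ _ _ le_rfl hl hab⟩
  · rintro a b ⟨y1, hy1, h1⟩ ⟨y2, hy2, h2⟩
    exact ⟨y1 ⊓ y2, hmeet _ _ hy1 hy2,
      E.ll6 _ _ _ (E.ll4 _ _ _ _ inf_le_left h1 le_rfl)
        (E.ll4 _ _ _ _ inf_le_right h2 le_rfl)⟩
end

section
/- Let D be an EDC-lattice. The canonical relation R^c on prime filters of D is reflexive and symmetric. -/
universe u

/-- the canonical relation `R^c` is reflexive and symmetric on prime filters. -/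
theorem stmt4 {D : Type u} [DistribLattice D] [BoundedOrder D] (E : EDC D) :
    (∀ Γ : Set D, PrimeFilter Γ → Rc E Γ Γ) ∧
    (∀ Γ Δ : Set D, PrimeFilter Γ → PrimeFilter Δ → Rc E Γ Δ → Rc E Δ Γ) := by
  constructor
  · rintro Γ ⟨⟨htop, hup, hmeet⟩, hbot, hprime⟩ a b
    refine ⟨fun ha hb => ?_, fun ha hb => ?_, fun ha hb hll => ?_, fun ha hb hll => ?_⟩
    · exact E.c5 a b (fun h => hbot (h ▸ hmeet a b ha hb))
    · refine E.cd5 a b (fun h => ?_)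
      rcases hprime a b (h ▸ htop) with h' | h' <;> [exact ha h'; exact hb h']
    · exact hb (hup a b ha (E.ll3 a b hll))
    · exact ha (hup b a hb (E.ll3 b a hll))
  · intro Γ Δ _ _ h a b
    obtain ⟨h1, h2, h3, h4⟩ := h b a
    obtain ⟨h1', h2', h3', h4'⟩ := h a b
    exact ⟨fun ha hb => E.c4 b a (h1 hb ha), fun ha hb => E.cd4 b a (h2 hb ha),
      fun ha hb => h4 hb ha, fun ha hb => h3 hb ha⟩
end

section
/- Let D be an EDC-lattice and a, b ∈ D. Then a C b if and only if there exist prime filters Γ and Δ of D such that a ∈ Γ, b ∈ Δ and Γ R^c Δ. -/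
universe u

section Stmt5Aux

variable {D : Type u} [DistribLattice D] [BoundedOrder D]

/-- The set of "good" pairs of filters for the statement-5 construction. -/
def GoodPairs (E : EDC D) (a b : D) : Set (Set D × Set D) :=
  {p | EDCFilter p.1 ∧ EDCFilter p.2 ∧ a ∈ p.1 ∧ b ∈ p.2 ∧
    ∀ x ∈ p.1, ∀ y ∈ p.2, E.C x y}

lemma goodPairs_chain_ub (E : EDC D) (a b : D) :
    ∀ c ⊆ GoodPairs E a b, IsChain (· ≤ ·) c → ∀ y ∈ c,
      ∃ ub ∈ GoodPairs E a b, ∀ z ∈ c, z ≤ ub := by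
  intro c hcS hchain y hy
  refine ⟨(⋃ p ∈ c, p.1, ⋃ p ∈ c, p.2), ?_, ?_⟩
  · have hdir : ∀ p ∈ c, ∀ q ∈ c, p ≤ q ∨ q ≤ p := by
      intro p hp q hq
      rcases eq_or_ne p q with rfl | hne
      · exact Or.inl le_rfl
      · exact hchain hp hq hne
    have hmem1 : ∀ {x : D}, x ∈ (⋃ p ∈ c, p.1) ↔ ∃ p ∈ c, x ∈ p.1 := by
      intro x; simp
    have hmem2 : ∀ {x : D}, x ∈ (⋃ p ∈ c, p.2) ↔ ∃ p ∈ c, x ∈ p.2 := by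
      intro x; simp
    refine ⟨⟨hmem1.2 ⟨y, hy, (hcS hy).1.1⟩, ?_, ?_⟩,
            ⟨hmem2.2 ⟨y, hy, (hcS hy).2.1.1⟩, ?_, ?_⟩,
            hmem1.2 ⟨y, hy, (hcS hy).2.2.1⟩,
            hmem2.2 ⟨y, hy, (hcS hy).2.2.2.1⟩, ?_⟩
    · rintro u v hu huv
      obtain ⟨p, hp, hup⟩ := hmem1.1 hu
      exact hmem1.2 ⟨p, hp, (hcS hp).1.2.1 u v hup huv⟩
    · rintro u v hu hv
      obtain ⟨p, hp, hup⟩ := hmem1.1 hu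
      obtain ⟨q, hq, hvq⟩ := hmem1.1 hv
      rcases hdir p hp q hq with h | h
      · exact hmem1.2 ⟨q, hq, (hcS hq).1.2.2 u v (h.1 hup) hvq⟩
      · exact hmem1.2 ⟨p, hp, (hcS hp).1.2.2 u v hup (h.1 hvq)⟩
    · rintro u v hu huv
      obtain ⟨p, hp, hup⟩ := hmem2.1 hu
      exact hmem2.2 ⟨p, hp, (hcS hp).2.1.2.1 u v hup huv⟩
    · rintro u v hu hv
      obtain ⟨p, hp, hup⟩ := hmem2.1 hu
      obtain ⟨q, hq, hvq⟩ := hmem2.1 hv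
      rcases hdir p hp q hq with h | h
      · exact hmem2.2 ⟨q, hq, (hcS hq).2.1.2.2 u v (h.2 hup) hvq⟩
      · exact hmem2.2 ⟨p, hp, (hcS hp).2.1.2.2 u v hup (h.2 hvq)⟩
    · intro u hu v hv
      obtain ⟨p, hp, hup⟩ := hmem1.1 hu
      obtain ⟨q, hq, hvq⟩ := hmem2.1 hv
      rcases hdir p hp q hq with h | h
      · exact (hcS hq).2.2.2.2 u (h.1 hup) v hvq
      · exact (hcS hp).2.2.2.2 u hup v (h.2 hvq)
  · intro z hz
    exact ⟨fun x hx => Set.mem_biUnion hz hx,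
           fun x hx => Set.mem_biUnion hz hx⟩

end Stmt5Aux

/-- `a C b` iff there are prime filters `Γ R^c Δ` with `a ∈ Γ`, `b ∈ Δ`. -/
theorem stmt5 {D : Type u} [DistribLattice D] [BoundedOrder D] (E : EDC D) (a b : D) :
    E.C a b ↔ ∃ Γ Δ : Set D, PrimeFilter Γ ∧ PrimeFilter Δ ∧ a ∈ Γ ∧ b ∈ Δ ∧ Rc E Γ Δ := by
  constructor
  · intro hab
    -- the seed pair of principal filters
    have hseed : (({x | a ≤ x}, {y | b ≤ y}) : Set D × Set D) ∈ GoodPairs E a b := by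
      refine ⟨⟨le_top, fun u v hu huv => le_trans hu huv,
               fun u v hu hv => le_inf hu hv⟩,
              ⟨le_top, fun u v hu huv => le_trans hu huv,
               fun u v hu hv => le_inf hu hv⟩,
              le_rfl, le_rfl, ?_⟩
      intro x hx y hy
      exact E.c2 a x b y hab hx hy
    obtain ⟨m, -, hmS, hmax⟩ := zorn_le_nonempty₀ (GoodPairs E a b)
      (goodPairs_chain_ub E a b) _ hseed
    obtain ⟨hF, hG, haF, hbG, hC⟩ := hmS
    set Γ := m.1 with hΓdef
    set Δ := m.2 with hΔdef
    -- key saturation lemma, left side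
    have keyL : ∀ x : D, (∀ f ∈ Γ, ∀ g ∈ Δ, E.C (f ⊓ x) g) → x ∈ Γ := by
      intro x hx
      set Γ' : Set D := {z | ∃ f ∈ Γ, f ⊓ x ≤ z} with hΓ'
      have hsub : Γ ⊆ Γ' := fun f hf => ⟨f, hf, inf_le_left⟩
      have hmem : (Γ', Δ) ∈ GoodPairs E a b := by
        refine ⟨⟨⟨⊤, hF.1, le_top⟩, ?_, ?_⟩, hG, hsub haF, hbG, ?_⟩
        · rintro u v ⟨f, hf, hfu⟩ huv
          exact ⟨f, hf, le_trans hfu huv⟩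
        · rintro u v ⟨f, hf, hfu⟩ ⟨f', hf', hf'v⟩
          refine ⟨f ⊓ f', hF.2.2 f f' hf hf', ?_⟩
          exact le_inf (le_trans (inf_le_inf_right x inf_le_left) hfu)
            (le_trans (inf_le_inf_right x inf_le_right) hf'v)
        · rintro u ⟨f, hf, hfu⟩ v hv
          exact E.c2 (f ⊓ x) u v v (hx f hf v hv) hfu le_rfl
      have hle : m ≤ (Γ', Δ) := ⟨hsub, le_rfl⟩
      have heq : (Γ', Δ) ≤ m := hmax hmem hle
      exact heq.1 ⟨⊤, hF.1, le_trans inf_le_right le_rfl⟩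
    -- key saturation lemma, right side
    have keyR : ∀ y : D, (∀ f ∈ Γ, ∀ g ∈ Δ, E.C f (g ⊓ y)) → y ∈ Δ := by
      intro y hy
      set Δ' : Set D := {z | ∃ g ∈ Δ, g ⊓ y ≤ z} with hΔ'
      have hsub : Δ ⊆ Δ' := fun g hg => ⟨g, hg, inf_le_left⟩
      have hmem : (Γ, Δ') ∈ GoodPairs E a b := by
        refine ⟨hF, ⟨⟨⊤, hG.1, le_top⟩, ?_, ?_⟩, haF, hsub hbG, ?_⟩
        · rintro u v ⟨g, hg, hgu⟩ huv
          exact ⟨g, hg, le_trans hgu huv⟩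
        · rintro u v ⟨g, hg, hgu⟩ ⟨g', hg', hg'v⟩
          refine ⟨g ⊓ g', hG.2.2 g g' hg hg', ?_⟩
          exact le_inf (le_trans (inf_le_inf_right y inf_le_left) hgu)
            (le_trans (inf_le_inf_right y inf_le_right) hg'v)
        · rintro u hu v ⟨g, hg, hgv⟩
          exact E.c2 u u (g ⊓ y) v (hy u hu g hg) le_rfl hgv
      have hle : m ≤ (Γ, Δ') := ⟨le_rfl, hsub⟩
      have heq : (Γ, Δ') ≤ m := hmax hmem hle
      exact heq.2 ⟨⊤, hG.1, le_trans inf_le_right le_rfl⟩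
    -- witness extraction
    have witL : ∀ x : D, x ∉ Γ → ∃ f ∈ Γ, ∃ g ∈ Δ, ¬ E.C (f ⊓ x) g := by
      intro x hx
      by_contra h
      push_neg at h
      exact hx (keyL x h)
    have witR : ∀ y : D, y ∉ Δ → ∃ f ∈ Γ, ∃ g ∈ Δ, ¬ E.C f (g ⊓ y) := by
      intro y hy
      by_contra h
      push_neg at h
      exact hy (keyR y h)
    -- Γ and Δ are prime filters
    have hbotΓ : (⊥ : D) ∉ Γ := by
      intro h
      exact (E.c1 ⊥ ⊤ (hC ⊥ h ⊤ hG.1)).1 rfl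
    have hbotΔ : (⊥ : D) ∉ Δ := by
      intro h
      exact (E.c1 ⊤ ⊥ (hC ⊤ hF.1 ⊥ h)).2 rfl
    have hprimeΓ : ∀ x y : D, x ⊔ y ∈ Γ → x ∈ Γ ∨ y ∈ Γ := by
      intro x y hxy
      by_contra h
      push_neg at h
      obtain ⟨f1, hf1, g1, hg1, h1⟩ := witL x h.1
      obtain ⟨f2, hf2, g2, hg2, h2⟩ := witL y h.2
      have hf : f1 ⊓ f2 ∈ Γ := hF.2.2 f1 f2 hf1 hf2
      have hg : g1 ⊓ g2 ∈ Δ := hG.2.2 g1 g2 hg1 hg2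
      have hc : E.C ((f1 ⊓ f2) ⊓ (x ⊔ y)) (g1 ⊓ g2) :=
        hC _ (hF.2.2 _ _ hf hxy) _ hg
      have hdist : (f1 ⊓ f2) ⊓ (x ⊔ y) = ((f1 ⊓ f2) ⊓ x) ⊔ ((f1 ⊓ f2) ⊓ y) :=
        inf_sup_left _ _ _
      rw [hdist] at hc
      rcases E.c3 _ _ _ (E.c4 _ _ hc) with hc' | hc'
      · exact h1 (E.c2 _ _ _ _ (E.c4 _ _ hc')
          (inf_le_inf_right x inf_le_left) inf_le_left)
      · exact h2 (E.c2 _ _ _ _ (E.c4 _ _ hc')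
          (inf_le_inf_right y inf_le_right) inf_le_right)
    have hprimeΔ : ∀ x y : D, x ⊔ y ∈ Δ → x ∈ Δ ∨ y ∈ Δ := by
      intro x y hxy
      by_contra h
      push_neg at h
      obtain ⟨f1, hf1, g1, hg1, h1⟩ := witR x h.1
      obtain ⟨f2, hf2, g2, hg2, h2⟩ := witR y h.2
      have hf : f1 ⊓ f2 ∈ Γ := hF.2.2 f1 f2 hf1 hf2
      have hg : g1 ⊓ g2 ∈ Δ := hG.2.2 g1 g2 hg1 hg2
      have hc : E.C (f1 ⊓ f2) ((g1 ⊓ g2) ⊓ (x ⊔ y)) :=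
        hC _ hf _ (hG.2.2 _ _ hg hxy)
      have hdist : (g1 ⊓ g2) ⊓ (x ⊔ y) = ((g1 ⊓ g2) ⊓ x) ⊔ ((g1 ⊓ g2) ⊓ y) :=
        inf_sup_left _ _ _
      rw [hdist] at hc
      rcases E.c3 _ _ _ hc with hc' | hc'
      · exact h1 (E.c2 _ _ _ _ hc' inf_le_left
          (inf_le_inf_right x inf_le_left))
      · exact h2 (E.c2 _ _ _ _ hc' inf_le_right
          (inf_le_inf_right y inf_le_right))
    refine ⟨Γ, Δ, ⟨hF, hbotΓ, hprimeΓ⟩, ⟨hG, hbotΔ, hprimeΔ⟩, haF, hbG, ?_⟩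
    intro x y
    refine ⟨fun hx hy => hC x hx y hy, ?_, ?_, ?_⟩
    · -- x ∉ Γ, y ∉ Δ → Cd x y, via MC2
      intro hx hy
      obtain ⟨f1, hf1, g1, hg1, h1⟩ := witL x hx
      obtain ⟨f2, hf2, g2, hg2, h2⟩ := witR y hy
      have hf : f1 ⊓ f2 ∈ Γ := hF.2.2 f1 f2 hf1 hf2
      have hg : g1 ⊓ g2 ∈ Δ := hG.2.2 g1 g2 hg1 hg2
      refine E.mc2 (f1 ⊓ f2) (g1 ⊓ g2) y x ?_ (hC _ hf _ hg) ?_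
      · intro h
        exact h2 (E.c2 _ _ _ _ h inf_le_right
          (inf_le_inf_right y inf_le_right))
      · intro h
        exact h1 (E.c2 _ _ _ _ h
          (inf_le_inf_right x inf_le_left) inf_le_left)
    · -- x ∈ Γ, y ∉ Δ → ¬ x ≪ y, via MC1
      intro hx hy hll
      obtain ⟨f, hf, g, hg, h1⟩ := witR y hy
      have hfx : f ⊓ x ∈ Γ := hF.2.2 f x hf hx
      have hc : E.C (f ⊓ x) g := hC _ hfx _ hg
      have hll' : E.Ll (f ⊓ x) y := E.ll4 x (f ⊓ x) y y inf_le_right hll le_rfl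
      have := E.mc1 (f ⊓ x) g y hc hll'
      exact h1 (E.c2 _ _ _ _ this inf_le_left le_rfl)
    · -- x ∉ Γ, y ∈ Δ → ¬ y ≪ x, via MC1
      intro hx hy hll
      obtain ⟨f, hf, g, hg, h1⟩ := witL x hx
      have hgy : g ⊓ y ∈ Δ := hG.2.2 g y hg hy
      have hc : E.C (g ⊓ y) f := E.c4 _ _ (hC _ hf _ hgy)
      have hll' : E.Ll (g ⊓ y) x := E.ll4 y (g ⊓ y) x x inf_le_right hll le_rfl
      have := E.mc1 (g ⊓ y) f x hc hll'
      exact h1 (E.c2 _ _ _ _ (E.c4 _ _ this) le_rfl inf_le_left)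
  · rintro ⟨Γ, Δ, hΓ, hΔ, ha, hb, hR⟩
    exact ((hR a b).1 ha hb)
end

section
/- Let D be an EDC-lattice and a, b ∈ D. Then: (1) a Ĉ b if and only if there exist prime filters Γ and Δ of D such that a ∉ Γ, b ∉ Δ and Γ R^c Δ; (2) ¬(b ≪ a) if and only if there exist prime filters Γ and Δ of D such that a ∉ Γ, b ∈ Δ and Γ R^c Δ. -/
universe u

section Helpers

variable {D : Type u} [DistribLattice D] [BoundedOrder D]

private lemma chain_two {α : Type*} [Preorder α] {c : Set α} (hc : IsChain (· ≤ ·) c)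
    {s t : α} (hs : s ∈ c) (ht : t ∈ c) : ∃ u ∈ c, s ≤ u ∧ t ≤ u := by
  rcases eq_or_ne s t with rfl | hne
  · exact ⟨s, hs, le_rfl, le_rfl⟩
  · rcases hc hs ht hne with h | h
    · exact ⟨t, ht, h, le_rfl⟩
    · exact ⟨s, hs, le_rfl, h⟩

/-! ### Construction for statement (1): `Cd a b` -/

private def Good1 (E : EDC D) (a b : D) (q : Set D × Set D) : Prop :=
  EDCIdeal q.1 ∧ EDCIdeal q.2 ∧ (∀ i ∈ q.1, ∀ j ∈ q.2, E.Cd i j) ∧ a ∈ q.1 ∧ b ∈ q.2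

private lemma good1_chain (E : EDC D) (a b : D) :
    ∀ c ⊆ {q : Set D × Set D | Good1 E a b q}, IsChain (· ≤ ·) c → ∀ y ∈ c,
      ∃ ub ∈ {q : Set D × Set D | Good1 E a b q}, ∀ z ∈ c, z ≤ ub := by
  intro c hcS hc y hy
  refine ⟨⟨{x | ∃ q ∈ c, x ∈ q.1}, {x | ∃ q ∈ c, x ∈ q.2}⟩, ⟨?_, ?_, ?_, ?_, ?_⟩, ?_⟩
  · refine ⟨⟨y, hy, (hcS hy).1.1⟩, ?_, ?_⟩
    · rintro u v ⟨q, hq, hu⟩ hle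
      exact ⟨q, hq, (hcS hq).1.2.1 u v hu hle⟩
    · rintro u v ⟨q, hq, hu⟩ ⟨r, hr, hv⟩
      obtain ⟨w, hw, hqw, hrw⟩ := chain_two hc hq hr
      exact ⟨w, hw, (hcS hw).1.2.2 u v (hqw.1 hu) (hrw.1 hv)⟩
  · refine ⟨⟨y, hy, (hcS hy).2.1.1⟩, ?_, ?_⟩
    · rintro u v ⟨q, hq, hu⟩ hle
      exact ⟨q, hq, (hcS hq).2.1.2.1 u v hu hle⟩
    · rintro u v ⟨q, hq, hu⟩ ⟨r, hr, hv⟩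
      obtain ⟨w, hw, hqw, hrw⟩ := chain_two hc hq hr
      exact ⟨w, hw, (hcS hw).2.1.2.2 u v (hqw.2 hu) (hrw.2 hv)⟩
  · rintro i ⟨q, hq, hi⟩ j ⟨r, hr, hj⟩
    obtain ⟨w, hw, hqw, hrw⟩ := chain_two hc hq hr
    exact (hcS hw).2.2.1 i (hqw.1 hi) j (hrw.2 hj)
  · exact ⟨y, hy, (hcS hy).2.2.2.1⟩
  · exact ⟨y, hy, (hcS hy).2.2.2.2⟩
  · intro z hz
    exact ⟨fun x hx => ⟨z, hz, hx⟩, fun x hx => ⟨z, hz, hx⟩⟩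

private lemma main1 (E : EDC D) {a b : D} (hab : E.Cd a b) :
    ∃ Γ Δ : Set D, PrimeFilter Γ ∧ PrimeFilter Δ ∧ a ∉ Γ ∧ b ∉ Δ ∧ Rc E Γ Δ := by
  obtain ⟨m, hm0, hmax⟩ := zorn_le_nonempty₀ {q : Set D × Set D | Good1 E a b q}
    (good1_chain E a b) ⟨{x | x ≤ a}, {x | x ≤ b}⟩
    ⟨⟨bot_le, fun u v hu hv => hv.trans hu, fun u v hu hv => sup_le hu hv⟩,
     ⟨bot_le, fun u v hu hv => hv.trans hu, fun u v hu hv => sup_le hu hv⟩,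
     fun i hi j hj => E.cd2 a i b j hab hi hj, le_refl a, le_refl b⟩
  have hG : Good1 E a b m := hmax.1
  obtain ⟨hI1, hI2, hcd, haI, hbI⟩ := hG
  -- blocking lemmas
  have block1 : ∀ x, x ∉ m.1 → ∃ i ∈ m.1, ∃ j ∈ m.2, ¬ E.Cd (i ⊔ x) j := by
    intro x hx
    by_contra h
    push_neg at h
    have hgood : Good1 E a b ⟨{z | ∃ i ∈ m.1, z ≤ i ⊔ x}, m.2⟩ := by
      refine ⟨⟨⟨⊥, hI1.1, bot_le⟩, ?_, ?_⟩, hI2, ?_, ⟨a, haI, le_sup_left⟩, hbI⟩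
      · rintro u v ⟨i, hi, hu⟩ hle
        exact ⟨i, hi, hle.trans hu⟩
      · rintro u v ⟨i, hi, hu⟩ ⟨i', hi', hv⟩
        exact ⟨i ⊔ i', hI1.2.2 i i' hi hi',
          sup_le (hu.trans (sup_le_sup_right le_sup_left x))
            (hv.trans (sup_le_sup_right le_sup_right x))⟩
      · rintro z ⟨i, hi, hz⟩ j hj
        exact E.cd2 (i ⊔ x) z j j (h i hi j hj) hz le_rfl
    have hle : m ≤ ⟨{z | ∃ i ∈ m.1, z ≤ i ⊔ x}, m.2⟩ :=
      ⟨fun z hz => ⟨z, hz, le_sup_left⟩, le_rfl⟩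
    have hsub := hmax.2 hgood hle
    exact hx (hsub.1 ⟨⊥, hI1.1, le_sup_right⟩)
  have block2 : ∀ y, y ∉ m.2 → ∃ i ∈ m.1, ∃ j ∈ m.2, ¬ E.Cd i (j ⊔ y) := by
    intro y hy
    by_contra h
    push_neg at h
    have hgood : Good1 E a b ⟨m.1, {z | ∃ j ∈ m.2, z ≤ j ⊔ y}⟩ := by
      refine ⟨hI1, ⟨⟨⊥, hI2.1, bot_le⟩, ?_, ?_⟩, ?_, haI, ⟨b, hbI, le_sup_left⟩⟩
      · rintro u v ⟨j, hj, hu⟩ hle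
        exact ⟨j, hj, hle.trans hu⟩
      · rintro u v ⟨j, hj, hu⟩ ⟨j', hj', hv⟩
        exact ⟨j ⊔ j', hI2.2.2 j j' hj hj',
          sup_le (hu.trans (sup_le_sup_right le_sup_left y))
            (hv.trans (sup_le_sup_right le_sup_right y))⟩
      · rintro i hi z ⟨j, hj, hz⟩
        exact E.cd2 i i (j ⊔ y) z (h i hi j hj) le_rfl hz
    have hle : m ≤ ⟨m.1, {z | ∃ j ∈ m.2, z ≤ j ⊔ y}⟩ :=
      ⟨le_rfl, fun z hz => ⟨z, hz, le_sup_left⟩⟩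
    have hsub := hmax.2 hgood hle
    exact hy (hsub.2 ⟨⊥, hI2.1, le_sup_right⟩)
  -- top not in ideals
  have htop1 : (⊤ : D) ∉ m.1 := fun h => (E.cd1 ⊤ ⊥ (hcd ⊤ h ⊥ hI2.1)).1 rfl
  have htop2 : (⊤ : D) ∉ m.2 := fun h => (E.cd1 ⊥ ⊤ (hcd ⊥ hI1.1 ⊤ h)).2 rfl
  -- the four canonical conditions
  have L1 : ∀ x y, x ∉ m.1 → y ∉ m.2 → E.C x y := by
    intro x y hx hy
    obtain ⟨i1, hi1, j1, hj1, hc1⟩ := block1 x hx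
    obtain ⟨i2, hi2, j2, hj2, hc2⟩ := block2 y hy
    have hi : i1 ⊔ i2 ∈ m.1 := hI1.2.2 i1 i2 hi1 hi2
    have hj : j1 ⊔ j2 ∈ m.2 := hI2.2.2 j1 j2 hj1 hj2
    have h1 : ¬ E.Cd ((i1 ⊔ i2) ⊔ x) (j1 ⊔ j2) := fun hcc =>
      hc1 (E.cd2 ((i1 ⊔ i2) ⊔ x) (i1 ⊔ x) (j1 ⊔ j2) j1 hcc
        (sup_le_sup_right le_sup_left x) le_sup_left)
    have h2 : ¬ E.Cd (i1 ⊔ i2) ((j1 ⊔ j2) ⊔ y) := fun hcc =>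
      hc2 (E.cd2 (i1 ⊔ i2) i2 ((j1 ⊔ j2) ⊔ y) (j2 ⊔ y) hcc
        le_sup_right (sup_le_sup_right le_sup_right y))
    exact E.mcd2 (i1 ⊔ i2) (j1 ⊔ j2) y x h2 (hcd _ hi _ hj) h1
  have L2 : ∀ x y, x ∉ m.1 → y ∈ m.2 → ¬ E.Ll x y := by
    intro x y hx hy hll
    obtain ⟨i, hi, j, hj, hc⟩ := block1 x hx
    have hj' : j ⊔ y ∈ m.2 := hI2.2.2 j y hj hy
    have h1 : E.Ll x (j ⊔ y) := E.ll4 x x y (j ⊔ y) le_rfl hll le_sup_right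
    have h3 : E.Cd (j ⊔ y) (i ⊔ x) :=
      E.mcd1 (j ⊔ y) i x (E.cd4 i (j ⊔ y) (hcd i hi (j ⊔ y) hj')) h1
    exact hc (E.cd2 (i ⊔ x) (i ⊔ x) (j ⊔ y) j (E.cd4 (j ⊔ y) (i ⊔ x) h3) le_rfl le_sup_left)
  have L3 : ∀ x y, x ∈ m.1 → y ∉ m.2 → ¬ E.Ll y x := by
    intro x y hx hy hll
    obtain ⟨i, hi, j, hj, hc⟩ := block2 y hy
    have hi' : i ⊔ x ∈ m.1 := hI1.2.2 i x hi hx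
    have h1 : E.Ll y (i ⊔ x) := E.ll4 y y x (i ⊔ x) le_rfl hll le_sup_right
    have h3 : E.Cd (i ⊔ x) (j ⊔ y) := E.mcd1 (i ⊔ x) j y (hcd (i ⊔ x) hi' j hj) h1
    exact hc (E.cd2 (i ⊔ x) i (j ⊔ y) (j ⊔ y) h3 le_sup_left le_rfl)
  -- prime ideal properties
  have meet1 : ∀ x y, x ∉ m.1 → y ∉ m.1 → x ⊓ y ∉ m.1 := by
    intro x y hx hy hxy
    obtain ⟨i1, hi1, j1, hj1, hc1⟩ := block1 x hx
    obtain ⟨i2, hi2, j2, hj2, hc2⟩ := block1 y hy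
    have hi : i1 ⊔ i2 ∈ m.1 := hI1.2.2 i1 i2 hi1 hi2
    have hj : j1 ⊔ j2 ∈ m.2 := hI2.2.2 j1 j2 hj1 hj2
    have h1 : ¬ E.Cd ((i1 ⊔ i2) ⊔ x) (j1 ⊔ j2) := fun hcc =>
      hc1 (E.cd2 _ (i1 ⊔ x) _ j1 hcc (sup_le_sup_right le_sup_left x) le_sup_left)
    have h2 : ¬ E.Cd ((i1 ⊔ i2) ⊔ y) (j1 ⊔ j2) := fun hcc =>
      hc2 (E.cd2 _ (i2 ⊔ y) _ j2 hcc (sup_le_sup_right le_sup_right y) le_sup_right)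
    have hmem : (i1 ⊔ i2) ⊔ (x ⊓ y) ∈ m.1 := hI1.2.2 _ _ hi hxy
    have hcd0 : E.Cd ((i1 ⊔ i2) ⊔ (x ⊓ y)) (j1 ⊔ j2) := hcd _ hmem _ hj
    rw [sup_inf_left] at hcd0
    rcases E.cd3 (j1 ⊔ j2) ((i1 ⊔ i2) ⊔ x) ((i1 ⊔ i2) ⊔ y)
        (E.cd4 _ _ hcd0) with h | h
    · exact h1 (E.cd4 _ _ h)
    · exact h2 (E.cd4 _ _ h)
  have meet2 : ∀ x y, x ∉ m.2 → y ∉ m.2 → x ⊓ y ∉ m.2 := by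
    intro x y hx hy hxy
    obtain ⟨i1, hi1, j1, hj1, hc1⟩ := block2 x hx
    obtain ⟨i2, hi2, j2, hj2, hc2⟩ := block2 y hy
    have hi : i1 ⊔ i2 ∈ m.1 := hI1.2.2 i1 i2 hi1 hi2
    have hj : j1 ⊔ j2 ∈ m.2 := hI2.2.2 j1 j2 hj1 hj2
    have h1 : ¬ E.Cd (i1 ⊔ i2) ((j1 ⊔ j2) ⊔ x) := fun hcc =>
      hc1 (E.cd2 _ i1 _ (j1 ⊔ x) hcc le_sup_left (sup_le_sup_right le_sup_left x))
    have h2 : ¬ E.Cd (i1 ⊔ i2) ((j1 ⊔ j2) ⊔ y) := fun hcc =>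
      hc2 (E.cd2 _ i2 _ (j2 ⊔ y) hcc le_sup_right (sup_le_sup_right le_sup_right y))
    have hmem : (j1 ⊔ j2) ⊔ (x ⊓ y) ∈ m.2 := hI2.2.2 _ _ hj hxy
    have hcd0 : E.Cd (i1 ⊔ i2) ((j1 ⊔ j2) ⊔ (x ⊓ y)) := hcd _ hi _ hmem
    rw [sup_inf_left] at hcd0
    rcases E.cd3 (i1 ⊔ i2) ((j1 ⊔ j2) ⊔ x) ((j1 ⊔ j2) ⊔ y) hcd0 with h | h
    · exact h1 h
    · exact h2 h
  refine ⟨{x | x ∉ m.1}, {x | x ∉ m.2}, ?_, ?_, ?_, ?_, ?_⟩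
  · refine ⟨⟨htop1, ?_, ?_⟩, ?_, ?_⟩
    · intro u v hu hle hv
      exact hu (hI1.2.1 v u hv hle)
    · intro u v hu hv
      exact meet1 u v hu hv
    · intro h
      exact h hI1.1
    · intro u v huv
      rcases Classical.em (u ∈ m.1) with hu | hu
      · rcases Classical.em (v ∈ m.1) with hv | hv
        · exact absurd (hI1.2.2 u v hu hv) huv
        · exact Or.inr hv
      · exact Or.inl hu
  · refine ⟨⟨htop2, ?_, ?_⟩, ?_, ?_⟩
    · intro u v hu hle hv
      exact hu (hI2.2.1 v u hv hle)
    · intro u v hu hv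
      exact meet2 u v hu hv
    · intro h
      exact h hI2.1
    · intro u v huv
      rcases Classical.em (u ∈ m.2) with hu | hu
      · rcases Classical.em (v ∈ m.2) with hv | hv
        · exact absurd (hI2.2.2 u v hu hv) huv
        · exact Or.inr hv
      · exact Or.inl hu
  · exact fun h => h haI
  · exact fun h => h hbI
  · intro x y
    refine ⟨fun hx hy => L1 x y hx hy, fun hx hy => hcd x (not_not.mp hx) y (not_not.mp hy),
      fun hx hy => L2 x y hx (not_not.mp hy), fun hx hy => L3 x y (not_not.mp hx) hy⟩

/-! ### Construction for statement (2): `¬ Ll b a` -/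

private def Good2 (E : EDC D) (a b : D) (q : Set D × Set D) : Prop :=
  EDCIdeal q.1 ∧ EDCFilter q.2 ∧ (∀ g ∈ q.2, ∀ i ∈ q.1, ¬ E.Ll g i) ∧ a ∈ q.1 ∧ b ∈ q.2

private lemma good2_chain (E : EDC D) (a b : D) :
    ∀ c ⊆ {q : Set D × Set D | Good2 E a b q}, IsChain (· ≤ ·) c → ∀ y ∈ c,
      ∃ ub ∈ {q : Set D × Set D | Good2 E a b q}, ∀ z ∈ c, z ≤ ub := by
  intro c hcS hc y hy
  refine ⟨⟨{x | ∃ q ∈ c, x ∈ q.1}, {x | ∃ q ∈ c, x ∈ q.2}⟩, ⟨?_, ?_, ?_, ?_, ?_⟩, ?_⟩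
  · refine ⟨⟨y, hy, (hcS hy).1.1⟩, ?_, ?_⟩
    · rintro u v ⟨q, hq, hu⟩ hle
      exact ⟨q, hq, (hcS hq).1.2.1 u v hu hle⟩
    · rintro u v ⟨q, hq, hu⟩ ⟨r, hr, hv⟩
      obtain ⟨w, hw, hqw, hrw⟩ := chain_two hc hq hr
      exact ⟨w, hw, (hcS hw).1.2.2 u v (hqw.1 hu) (hrw.1 hv)⟩
  · refine ⟨⟨y, hy, (hcS hy).2.1.1⟩, ?_, ?_⟩
    · rintro u v ⟨q, hq, hu⟩ hle
      exact ⟨q, hq, (hcS hq).2.1.2.1 u v hu hle⟩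
    · rintro u v ⟨q, hq, hu⟩ ⟨r, hr, hv⟩
      obtain ⟨w, hw, hqw, hrw⟩ := chain_two hc hq hr
      exact ⟨w, hw, (hcS hw).2.1.2.2 u v (hqw.2 hu) (hrw.2 hv)⟩
  · rintro g ⟨q, hq, hg⟩ i ⟨r, hr, hi⟩
    obtain ⟨w, hw, hqw, hrw⟩ := chain_two hc hq hr
    exact (hcS hw).2.2.1 g (hqw.2 hg) i (hrw.1 hi)
  · exact ⟨y, hy, (hcS hy).2.2.2.1⟩
  · exact ⟨y, hy, (hcS hy).2.2.2.2⟩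
  · intro z hz
    exact ⟨fun x hx => ⟨z, hz, hx⟩, fun x hx => ⟨z, hz, hx⟩⟩

private lemma main2 (E : EDC D) {a b : D} (hab : ¬ E.Ll b a) :
    ∃ Γ Δ : Set D, PrimeFilter Γ ∧ PrimeFilter Δ ∧ a ∉ Γ ∧ b ∈ Δ ∧ Rc E Γ Δ := by
  obtain ⟨m, hm0, hmax⟩ := zorn_le_nonempty₀ {q : Set D × Set D | Good2 E a b q}
    (good2_chain E a b) ⟨{x | x ≤ a}, {x | b ≤ x}⟩
    ⟨⟨bot_le, fun u v hu hv => hv.trans hu, fun u v hu hv => sup_le hu hv⟩,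
     ⟨le_top, fun u v hu hv => hu.trans hv, fun u v hu hv => le_inf hu hv⟩,
     fun g hg i hi hll => hab (E.ll4 g b i a hg hll hi), le_refl a, le_refl b⟩
  have hG : Good2 E a b m := hmax.1
  obtain ⟨hI1, hF2, hinv, haI, hbF⟩ := hG
  have block1 : ∀ x, x ∉ m.1 → ∃ g ∈ m.2, ∃ i ∈ m.1, E.Ll g (i ⊔ x) := by
    intro x hx
    by_contra h
    push_neg at h
    have hgood : Good2 E a b ⟨{z | ∃ i ∈ m.1, z ≤ i ⊔ x}, m.2⟩ := by
      refine ⟨⟨⟨⊥, hI1.1, bot_le⟩, ?_, ?_⟩, hF2, ?_, ⟨a, haI, le_sup_left⟩, hbF⟩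
      · rintro u v ⟨i, hi, hu⟩ hle
        exact ⟨i, hi, hle.trans hu⟩
      · rintro u v ⟨i, hi, hu⟩ ⟨i', hi', hv⟩
        exact ⟨i ⊔ i', hI1.2.2 i i' hi hi',
          sup_le (hu.trans (sup_le_sup_right le_sup_left x))
            (hv.trans (sup_le_sup_right le_sup_right x))⟩
      · rintro g hg z ⟨i, hi, hz⟩ hll
        exact h g hg i hi (E.ll4 g g z (i ⊔ x) le_rfl hll hz)
    have hle : m ≤ ⟨{z | ∃ i ∈ m.1, z ≤ i ⊔ x}, m.2⟩ :=
      ⟨fun z hz => ⟨z, hz, le_sup_left⟩, le_rfl⟩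
    have hsub := hmax.2 hgood hle
    exact hx (hsub.1 ⟨⊥, hI1.1, le_sup_right⟩)
  have block2 : ∀ y, y ∉ m.2 → ∃ g ∈ m.2, ∃ i ∈ m.1, E.Ll (g ⊓ y) i := by
    intro y hy
    by_contra h
    push_neg at h
    have hgood : Good2 E a b ⟨m.1, {z | ∃ g ∈ m.2, g ⊓ y ≤ z}⟩ := by
      refine ⟨hI1, ⟨⟨⊤, hF2.1, le_top⟩, ?_, ?_⟩, ?_, haI, ⟨b, hbF, inf_le_left⟩⟩
      · rintro u v ⟨g, hg, hu⟩ hle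
        exact ⟨g, hg, hu.trans hle⟩
      · rintro u v ⟨g, hg, hu⟩ ⟨g', hg', hv⟩
        exact ⟨g ⊓ g', hF2.2.2 g g' hg hg',
          le_inf ((inf_le_inf_right y inf_le_left).trans hu)
            ((inf_le_inf_right y inf_le_right).trans hv)⟩
      · rintro z ⟨g, hg, hz⟩ i hi hll
        exact h g hg i hi (E.ll4 z (g ⊓ y) i i hz hll le_rfl)
    have hle : m ≤ ⟨m.1, {z | ∃ g ∈ m.2, g ⊓ y ≤ z}⟩ :=
      ⟨le_rfl, fun z hz => ⟨z, hz, inf_le_left⟩⟩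
    have hsub := hmax.2 hgood hle
    exact hy (hsub.2 ⟨⊤, hF2.1, inf_le_right⟩)
  have htop1 : (⊤ : D) ∉ m.1 := fun h =>
    hinv b hbF ⊤ h (E.ll4 ⊤ b ⊤ ⊤ le_top E.ll2 le_rfl)
  have hbot2 : (⊥ : D) ∉ m.2 := fun h => hinv ⊥ h ⊥ hI1.1 E.ll1
  have M1 : ∀ x y, x ∉ m.1 → y ∈ m.2 → E.C x y := by
    intro x y hx hy
    obtain ⟨g, hg, i, hi, hb1⟩ := block1 x hx
    have hg' : g ⊓ y ∈ m.2 := hF2.2.2 g y hg hy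
    have h1 : E.Ll (g ⊓ y) (x ⊔ i) :=
      E.ll4 g (g ⊓ y) (i ⊔ x) (x ⊔ i) inf_le_left hb1 (sup_comm i x).le
    have hC : E.C x (g ⊓ y) := by
      by_contra hc
      exact hinv (g ⊓ y) hg' i hi (E.mll2 x (g ⊓ y) i hc h1)
    exact E.c2 x x (g ⊓ y) y hC le_rfl inf_le_right
  have M2 : ∀ x y, x ∈ m.1 → y ∉ m.2 → E.Cd x y := by
    intro x y hx hy
    obtain ⟨g, hg, i, hi, hb2⟩ := block2 y hy
    have hi' : i ⊔ x ∈ m.1 := hI1.2.2 i x hi hx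
    have h1 : E.Ll (y ⊓ g) (i ⊔ x) :=
      E.ll4 (g ⊓ y) (y ⊓ g) i (i ⊔ x) (inf_comm y g).le hb2 le_sup_left
    have hCd : E.Cd y (i ⊔ x) := by
      by_contra hc
      exact hinv g hg (i ⊔ x) hi' (E.mll1 y (i ⊔ x) g hc h1)
    exact E.cd4 y x (E.cd2 y y (i ⊔ x) x hCd le_rfl le_sup_right)
  have M3 : ∀ x y, x ∉ m.1 → y ∉ m.2 → ¬ E.Ll x y := by
    intro x y hx hy hll
    obtain ⟨g1, hg1, i1, hi1, hb1⟩ := block1 x hx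
    obtain ⟨g2, hg2, i2, hi2, hb2⟩ := block2 y hy
    have hg : g1 ⊓ g2 ∈ m.2 := hF2.2.2 g1 g2 hg1 hg2
    have hi : i1 ⊔ i2 ∈ m.1 := hI1.2.2 i1 i2 hi1 hi2
    have h1 : E.Ll (g1 ⊓ g2) (x ⊔ (i1 ⊔ i2)) :=
      E.ll4 g1 (g1 ⊓ g2) (i1 ⊔ x) (x ⊔ (i1 ⊔ i2)) inf_le_left hb1
        (sup_le (le_sup_left.trans le_sup_right) le_sup_left)
    have h2 : E.Ll (y ⊓ (g1 ⊓ g2)) (i1 ⊔ i2) :=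
      E.ll4 (g2 ⊓ y) (y ⊓ (g1 ⊓ g2)) i2 (i1 ⊔ i2)
        ((inf_le_inf_left y inf_le_right).trans (inf_comm y g2).le) hb2 le_sup_right
    exact hinv (g1 ⊓ g2) hg (i1 ⊔ i2) hi (E.ll7 x y (g1 ⊓ g2) (i1 ⊔ i2) hll h2 h1)
  have meet1 : ∀ x y, x ∉ m.1 → y ∉ m.1 → x ⊓ y ∉ m.1 := by
    intro x y hx hy hxy
    obtain ⟨g1, hg1, i1, hi1, hb1⟩ := block1 x hx
    obtain ⟨g2, hg2, i2, hi2, hb2⟩ := block1 y hy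
    have hg : g1 ⊓ g2 ∈ m.2 := hF2.2.2 g1 g2 hg1 hg2
    have h1 : E.Ll (g1 ⊓ g2) ((i1 ⊔ i2) ⊔ x) :=
      E.ll4 g1 (g1 ⊓ g2) (i1 ⊔ x) ((i1 ⊔ i2) ⊔ x) inf_le_left hb1
        (sup_le_sup_right le_sup_left x)
    have h2 : E.Ll (g1 ⊓ g2) ((i1 ⊔ i2) ⊔ y) :=
      E.ll4 g2 (g1 ⊓ g2) (i2 ⊔ y) ((i1 ⊔ i2) ⊔ y) inf_le_right hb2
        (sup_le_sup_right le_sup_right y)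
    have h3 : E.Ll (g1 ⊓ g2) (((i1 ⊔ i2) ⊔ x) ⊓ ((i1 ⊔ i2) ⊔ y)) :=
      E.ll6 ((i1 ⊔ i2) ⊔ x) ((i1 ⊔ i2) ⊔ y) (g1 ⊓ g2) h1 h2
    rw [← sup_inf_left] at h3
    have hmem : (i1 ⊔ i2) ⊔ (x ⊓ y) ∈ m.1 := hI1.2.2 (i1 ⊔ i2) (x ⊓ y) (hI1.2.2 i1 i2 hi1 hi2) hxy
    exact hinv (g1 ⊓ g2) hg ((i1 ⊔ i2) ⊔ (x ⊓ y)) hmem h3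
  have prime2 : ∀ u v : D, u ⊔ v ∈ m.2 → u ∈ m.2 ∨ v ∈ m.2 := by
    intro u v huv
    rcases Classical.em (u ∈ m.2) with hu | hu
    · exact Or.inl hu
    rcases Classical.em (v ∈ m.2) with hv | hv
    · exact Or.inr hv
    exfalso
    obtain ⟨g1, hg1, i1, hi1, hb1⟩ := block2 u hu
    obtain ⟨g2, hg2, i2, hi2, hb2⟩ := block2 v hv
    have hg : g1 ⊓ g2 ∈ m.2 := hF2.2.2 g1 g2 hg1 hg2
    have hi : i1 ⊔ i2 ∈ m.1 := hI1.2.2 i1 i2 hi1 hi2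
    have h1 : E.Ll ((g1 ⊓ g2) ⊓ u) (i1 ⊔ i2) :=
      E.ll4 (g1 ⊓ u) ((g1 ⊓ g2) ⊓ u) i1 (i1 ⊔ i2)
        (inf_le_inf_right u inf_le_left) hb1 le_sup_left
    have h2 : E.Ll ((g1 ⊓ g2) ⊓ v) (i1 ⊔ i2) :=
      E.ll4 (g2 ⊓ v) ((g1 ⊓ g2) ⊓ v) i2 (i1 ⊔ i2)
        (inf_le_inf_right v inf_le_right) hb2 le_sup_right
    have h3 : E.Ll (((g1 ⊓ g2) ⊓ u) ⊔ ((g1 ⊓ g2) ⊓ v)) (i1 ⊔ i2) :=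
      E.ll5 ((g1 ⊓ g2) ⊓ u) ((g1 ⊓ g2) ⊓ v) (i1 ⊔ i2) h1 h2
    rw [← inf_sup_left] at h3
    exact hinv ((g1 ⊓ g2) ⊓ (u ⊔ v)) (hF2.2.2 (g1 ⊓ g2) (u ⊔ v) hg huv) (i1 ⊔ i2) hi h3
  refine ⟨{x | x ∉ m.1}, m.2, ?_, ⟨hF2, hbot2, prime2⟩, ?_, hbF, ?_⟩
  · refine ⟨⟨htop1, ?_, ?_⟩, ?_, ?_⟩
    · intro u v hu hle hv
      exact hu (hI1.2.1 v u hv hle)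
    · intro u v hu hv
      exact meet1 u v hu hv
    · intro h
      exact h hI1.1
    · intro u v huv
      rcases Classical.em (u ∈ m.1) with hu | hu
      · rcases Classical.em (v ∈ m.1) with hv | hv
        · exact absurd (hI1.2.2 u v hu hv) huv
        · exact Or.inr hv
      · exact Or.inl hu
  · exact fun h => h haI
  · intro x y
    exact ⟨fun hx hy => M1 x y hx hy, fun hx hy => M2 x y (not_not.mp hx) hy,
      fun hx hy => M3 x y hx hy, fun hx hy => hinv y hy x (not_not.mp hx)⟩

end Helpers

/-- characterizations of `Ĉ` and of `¬(b ≪ a)` via prime filters. -/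
theorem stmt7 {D : Type u} [DistribLattice D] [BoundedOrder D] (E : EDC D) (a b : D) :
    (E.Cd a b ↔ ∃ Γ Δ : Set D, PrimeFilter Γ ∧ PrimeFilter Δ ∧ a ∉ Γ ∧ b ∉ Δ ∧ Rc E Γ Δ) ∧
    (¬ E.Ll b a ↔ ∃ Γ Δ : Set D, PrimeFilter Γ ∧ PrimeFilter Δ ∧ a ∉ Γ ∧ b ∈ Δ ∧ Rc E Γ Δ) := by
  constructor
  · constructor
    · intro h
      exact main1 E h
    · rintro ⟨Γ, Δ, hΓ, hΔ, ha, hb, hR⟩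
      exact ((hR a b).2.1) ha hb
  · constructor
    · intro h
      exact main2 E h
    · rintro ⟨Γ, Δ, hΓ, hΔ, ha, hb, hR⟩
      exact ((hR a b).2.2.2) ha hb
end

section
/- Relational representation theorem for EDC-lattices: Let D be an EDC-lattice. Then there exist a set W, a reflexive and symmetric binary relation R on W, and a map h : D → (subsets of W) such that: h is injective, h(0) = ∅, h(1) = W, h(a+b) = h(a) ∪ h(b), h(a·b) = h(a) ∩ h(b), and for all a, b ∈ D: a C b iff there exist x ∈ h(a), y ∈ h(b) with x R y; a Ĉ b iff there exist x ∉ h(a), y ∉ h(b) with x R y; a ≪ b iff there are no x ∈ h(a), y ∉ h(b) with x R y. -/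
set_option linter.unusedSectionVars false


universe u

namespace EDCRep

variable {D : Type u} [DistribLattice D] [BoundedOrder D]

lemma upSet_filter (a : D) : EDCFilter {z : D | a ≤ z} :=
  ⟨le_top, fun _ _ hx hxy => hx.trans hxy, fun _ _ hx hy => le_inf hx hy⟩

lemma downSet_ideal (a : D) : EDCIdeal {z : D | z ≤ a} :=
  ⟨bot_le, fun _ _ hx hyx => hyx.trans hx, fun _ _ hx hy => sup_le hx hy⟩

lemma fext_filter {F : Set D} (hF : EDCFilter F) (x : D) :
    EDCFilter {z | ∃ f ∈ F, f ⊓ x ≤ z} := by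
  refine ⟨⟨⊤, hF.1, le_top⟩, ?_, ?_⟩
  · rintro z w ⟨f, hf, hfz⟩ hzw
    exact ⟨f, hf, hfz.trans hzw⟩
  · rintro z w ⟨f, hf, hfz⟩ ⟨g, hg, hgw⟩
    refine ⟨f ⊓ g, hF.2.2 _ _ hf hg, ?_⟩
    have h1 : f ⊓ g ⊓ x ≤ (f ⊓ x) ⊓ (g ⊓ x) :=
      le_inf (inf_le_inf_right x inf_le_left) (inf_le_inf_right x inf_le_right)
    exact h1.trans (inf_le_inf hfz hgw)

lemma subset_fext {F : Set D} (x : D) : F ⊆ {z | ∃ f ∈ F, f ⊓ x ≤ z} :=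
  fun z hz => ⟨z, hz, inf_le_left⟩

lemma mem_fext {F : Set D} (hF : EDCFilter F) (x : D) : x ∈ {z | ∃ f ∈ F, f ⊓ x ≤ z} :=
  ⟨⊤, hF.1, inf_le_right⟩

lemma iext_ideal {Q : Set D} (hQ : EDCIdeal Q) (x : D) :
    EDCIdeal {z | ∃ q ∈ Q, z ≤ q ⊔ x} := by
  refine ⟨⟨⊥, hQ.1, bot_le⟩, ?_, ?_⟩
  · rintro z w ⟨q, hq, hzq⟩ hwz
    exact ⟨q, hq, hwz.trans hzq⟩
  · rintro z w ⟨q, hq, hzq⟩ ⟨r, hr, hwr⟩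
    refine ⟨q ⊔ r, hQ.2.2 _ _ hq hr, ?_⟩
    refine (sup_le_sup hzq hwr).trans ?_
    exact sup_le (sup_le (le_sup_left.trans le_sup_left) le_sup_right)
      (sup_le (le_sup_right.trans le_sup_left) le_sup_right)

lemma subset_iext {Q : Set D} (x : D) : Q ⊆ {z | ∃ q ∈ Q, z ≤ q ⊔ x} :=
  fun z hz => ⟨z, hz, le_sup_left⟩

lemma mem_iext {Q : Set D} (hQ : EDCIdeal Q) (x : D) : x ∈ {z | ∃ q ∈ Q, z ≤ q ⊔ x} :=
  ⟨⊥, hQ.1, le_sup_right⟩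

lemma filter_sUnion {S : Set (Set D)} (hS : IsChain (· ⊆ ·) S) (hne : S.Nonempty)
    (h : ∀ s ∈ S, EDCFilter s) : EDCFilter (⋃₀ S) := by
  obtain ⟨s0, hs0⟩ := hne
  refine ⟨⟨s0, hs0, (h s0 hs0).1⟩, ?_, ?_⟩
  · rintro x y ⟨s, hs, hx⟩ hxy
    exact ⟨s, hs, (h s hs).2.1 x y hx hxy⟩
  · rintro x y ⟨s, hs, hx⟩ ⟨t, ht, hy⟩
    rcases eq_or_ne s t with rfl | hst
    · exact ⟨s, hs, (h s hs).2.2 x y hx hy⟩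
    rcases hS hs ht hst with hsub | hsub
    · exact ⟨t, ht, (h t ht).2.2 x y (hsub hx) hy⟩
    · exact ⟨s, hs, (h s hs).2.2 x y hx (hsub hy)⟩

lemma ideal_sUnion {S : Set (Set D)} (hS : IsChain (· ⊆ ·) S) (hne : S.Nonempty)
    (h : ∀ s ∈ S, EDCIdeal s) : EDCIdeal (⋃₀ S) := by
  obtain ⟨s0, hs0⟩ := hne
  refine ⟨⟨s0, hs0, (h s0 hs0).1⟩, ?_, ?_⟩
  · rintro x y ⟨s, hs, hx⟩ hxy
    exact ⟨s, hs, (h s hs).2.1 x y hx hxy⟩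
  · rintro x y ⟨s, hs, hx⟩ ⟨t, ht, hy⟩
    rcases eq_or_ne s t with rfl | hst
    · exact ⟨s, hs, (h s hs).2.2 x y hx hy⟩
    rcases hS hs ht hst with hsub | hsub
    · exact ⟨t, ht, (h t ht).2.2 x y (hsub hx) hy⟩
    · exact ⟨s, hs, (h s hs).2.2 x y hx (hsub hy)⟩

lemma cross_sUnion {c : Set (Set D × Set D)} (hchain : IsChain (· ≤ ·) c)
    {Rel : D → D → Prop} (h : ∀ p ∈ c, ∀ x ∈ p.1, ∀ y ∈ p.2, Rel x y) :
    ∀ x ∈ ⋃₀ (Prod.fst '' c), ∀ y ∈ ⋃₀ (Prod.snd '' c), Rel x y := by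
  rintro x ⟨_, ⟨p, hp, rfl⟩, hx⟩ y ⟨_, ⟨q, hq, rfl⟩, hy⟩
  rcases eq_or_ne p q with rfl | hpq
  · exact h p hp x hx y hy
  rcases hchain hp hq hpq with hle | hle
  · exact h q hq x (hle.1 hx) y hy
  · exact h p hp x hx y (hle.2 hy)

lemma zorn_pairs (Q : Set D × Set D → Prop)
    (hU : ∀ c : Set (Set D × Set D), c ⊆ setOf Q → IsChain (· ≤ ·) c → c.Nonempty →
      Q (⋃₀ (Prod.fst '' c), ⋃₀ (Prod.snd '' c)))
    (p₀ : Set D × Set D) (hp₀ : Q p₀) :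
    ∃ m : Set D × Set D, Q m ∧ p₀.1 ⊆ m.1 ∧ p₀.2 ⊆ m.2 ∧
      ∀ q : Set D × Set D, Q q → m.1 ⊆ q.1 → m.2 ⊆ q.2 → q = m := by
  obtain ⟨m, hle, hmax⟩ := zorn_le_nonempty₀ (setOf Q) (fun c hc hchain y hy => by
    refine ⟨(⋃₀ (Prod.fst '' c), ⋃₀ (Prod.snd '' c)), hU c hc hchain ⟨y, hy⟩, ?_⟩
    intro z hz
    exact ⟨Set.subset_sUnion_of_mem ⟨z, hz, rfl⟩, Set.subset_sUnion_of_mem ⟨z, hz, rfl⟩⟩) p₀ hp₀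
  refine ⟨m, hmax.1, hle.1, hle.2, ?_⟩
  intro q hq h1 h2
  exact le_antisymm (hmax.2 hq ⟨h1, h2⟩) ⟨h1, h2⟩

end EDCRep

namespace EDCRep

variable {D : Type u} [DistribLattice D] [BoundedOrder D]

lemma exists_pair_of_C (E : EDC D) {a b : D} (hab : E.C a b) :
    ∃ Γ Δ : Set D, PrimeFilter Γ ∧ PrimeFilter Δ ∧ a ∈ Γ ∧ b ∈ Δ ∧ Rc E Γ Δ := by
  have hU : ∀ c : Set (Set D × Set D),
      c ⊆ {p : Set D × Set D | EDCFilter p.1 ∧ EDCFilter p.2 ∧ a ∈ p.1 ∧ b ∈ p.2 ∧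
        ∀ x ∈ p.1, ∀ y ∈ p.2, E.C x y} →
      IsChain (· ≤ ·) c → c.Nonempty →
      (EDCFilter (⋃₀ (Prod.fst '' c), ⋃₀ (Prod.snd '' c)).1 ∧
       EDCFilter (⋃₀ (Prod.fst '' c), ⋃₀ (Prod.snd '' c)).2 ∧
       a ∈ (⋃₀ (Prod.fst '' c), ⋃₀ (Prod.snd '' c)).1 ∧
       b ∈ (⋃₀ (Prod.fst '' c), ⋃₀ (Prod.snd '' c)).2 ∧
       ∀ x ∈ (⋃₀ (Prod.fst '' c), ⋃₀ (Prod.snd '' c)).1,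
       ∀ y ∈ (⋃₀ (Prod.fst '' c), ⋃₀ (Prod.snd '' c)).2, E.C x y) := by
    intro c hc hchain hne
    obtain ⟨p0, hp0⟩ := hne
    refine ⟨filter_sUnion (hchain.image_of_map_rel _ _ _ (fun p q h => h.1)) ⟨p0.1, ⟨p0, hp0, rfl⟩⟩ ?_,
      filter_sUnion (hchain.image_of_map_rel _ _ _ (fun p q h => h.2)) ⟨p0.2, ⟨p0, hp0, rfl⟩⟩ ?_,
      ⟨p0.1, ⟨p0, hp0, rfl⟩, (hc hp0).2.2.1⟩,
      ⟨p0.2, ⟨p0, hp0, rfl⟩, (hc hp0).2.2.2.1⟩,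
      cross_sUnion hchain (fun p hp => (hc hp).2.2.2.2)⟩
    · rintro s ⟨p, hp, rfl⟩; exact (hc hp).1
    · rintro s ⟨p, hp, rfl⟩; exact (hc hp).2.1
  obtain ⟨⟨Γ, Δ⟩, ⟨hF, hG, haF, hbG, hcross⟩, hsub1, hsub2, hmax⟩ :=
    zorn_pairs (fun p => EDCFilter p.1 ∧ EDCFilter p.2 ∧ a ∈ p.1 ∧ b ∈ p.2 ∧
        ∀ x ∈ p.1, ∀ y ∈ p.2, E.C x y) hU
      ({z | a ≤ z}, {z | b ≤ z})
      ⟨upSet_filter a, upSet_filter b, le_rfl, le_rfl,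
        fun x hx y hy => E.c2 _ _ _ _ hab hx hy⟩
  have keyF : ∀ x, x ∉ Γ → ∃ f ∈ Γ, ∃ g ∈ Δ, ¬ E.C (f ⊓ x) g := by
    intro x hx
    by_contra hcon
    push_neg at hcon
    have heq := hmax ({z | ∃ f ∈ Γ, f ⊓ x ≤ z}, Δ)
      ⟨fext_filter hF x, hG, subset_fext x haF, hbG, by
        rintro z ⟨f, hf, hfz⟩ y hy
        exact E.c2 _ _ _ _ (hcon f hf y hy) hfz le_rfl⟩
      (subset_fext x) subset_rfl
    have h1 : {z | ∃ f ∈ Γ, f ⊓ x ≤ z} = Γ := congrArg Prod.fst heq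
    exact hx (h1 ▸ mem_fext hF x)
  have keyG : ∀ y, y ∉ Δ → ∃ f ∈ Γ, ∃ g ∈ Δ, ¬ E.C f (g ⊓ y) := by
    intro y hy
    by_contra hcon
    push_neg at hcon
    have heq := hmax (Γ, {z | ∃ g ∈ Δ, g ⊓ y ≤ z})
      ⟨hF, fext_filter hG y, haF, subset_fext y hbG, by
        rintro z hz w ⟨g, hg, hgw⟩
        exact E.c2 _ _ _ _ (hcon z hz g hg) le_rfl hgw⟩
      subset_rfl (subset_fext y)
    have h1 : {z | ∃ g ∈ Δ, g ⊓ y ≤ z} = Δ := congrArg Prod.snd heq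
    exact hy (h1 ▸ mem_fext hG y)
  have hbotF : (⊥ : D) ∉ Γ := fun h0 => (E.c1 _ _ (hcross _ h0 _ hbG)).1 rfl
  have hbotG : (⊥ : D) ∉ Δ := fun h0 => (E.c1 _ _ (hcross _ haF _ h0)).2 rfl
  have hprimeF : ∀ x y : D, x ⊔ y ∈ Γ → x ∈ Γ ∨ y ∈ Γ := by
    intro x y hxy
    by_contra hcon
    push_neg at hcon
    obtain ⟨f, hf, g, hg, hC⟩ := keyF x hcon.1
    obtain ⟨f', hf', g', hg', hC'⟩ := keyF y hcon.2
    have h1 : E.C ((f ⊓ f') ⊓ (x ⊔ y)) (g ⊓ g') :=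
      hcross _ (hF.2.2 _ _ (hF.2.2 _ _ hf hf') hxy) _ (hG.2.2 _ _ hg hg')
    rw [inf_sup_left] at h1
    rcases E.c3 _ _ _ (E.c4 _ _ h1) with h2 | h2
    · exact hC (E.c2 _ _ _ _ (E.c4 _ _ h2) (inf_le_inf_right x inf_le_left) inf_le_left)
    · exact hC' (E.c2 _ _ _ _ (E.c4 _ _ h2) (inf_le_inf_right y inf_le_right) inf_le_right)
  have hprimeG : ∀ x y : D, x ⊔ y ∈ Δ → x ∈ Δ ∨ y ∈ Δ := by
    intro x y hxy
    by_contra hcon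
    push_neg at hcon
    obtain ⟨f, hf, g, hg, hC⟩ := keyG x hcon.1
    obtain ⟨f', hf', g', hg', hC'⟩ := keyG y hcon.2
    have h1 : E.C (f ⊓ f') ((g ⊓ g') ⊓ (x ⊔ y)) :=
      hcross _ (hF.2.2 _ _ hf hf') _ (hG.2.2 _ _ (hG.2.2 _ _ hg hg') hxy)
    rw [inf_sup_left] at h1
    rcases E.c3 _ _ _ h1 with h2 | h2
    · exact hC (E.c2 _ _ _ _ h2 inf_le_left (inf_le_inf_right x inf_le_left))
    · exact hC' (E.c2 _ _ _ _ h2 inf_le_right (inf_le_inf_right y inf_le_right))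
  refine ⟨Γ, Δ, ⟨hF, hbotF, hprimeF⟩, ⟨hG, hbotG, hprimeG⟩, haF, hbG, ?_⟩
  intro u v
  refine ⟨fun hu hv => hcross _ hu _ hv, ?_, ?_, ?_⟩
  · intro hu hv
    obtain ⟨f, hf, g, hg, hC⟩ := keyF u hu
    obtain ⟨f', hf', g', hg', hC'⟩ := keyG v hv
    refine E.mc2 (f ⊓ f') (g ⊓ g') v u ?_ ?_ ?_
    · intro h
      exact hC' (E.c2 _ _ _ _ h inf_le_right (inf_le_inf_right v inf_le_right))
    · exact hcross _ (hF.2.2 _ _ hf hf') _ (hG.2.2 _ _ hg hg')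
    · intro h
      exact hC (E.c2 _ _ _ _ h (inf_le_inf_right u inf_le_left) inf_le_left)
  · intro hu hv hLl
    obtain ⟨f, hf, g, hg, hC⟩ := keyG v hv
    have h1 : E.C (f ⊓ u) g := hcross _ (hF.2.2 _ _ hf hu) _ hg
    have h2 : E.Ll (f ⊓ u) v := E.ll4 _ _ _ _ inf_le_right hLl le_rfl
    exact hC (E.c2 _ _ _ _ (E.mc1 _ _ _ h1 h2) inf_le_left le_rfl)
  · intro hu hv hLl
    obtain ⟨f, hf, g, hg, hC⟩ := keyF u hu
    have h1 : E.C (g ⊓ v) f := E.c4 _ _ (hcross _ hf _ (hG.2.2 _ _ hg hv))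
    have h2 : E.Ll (g ⊓ v) u := E.ll4 _ _ _ _ inf_le_right hLl le_rfl
    exact hC (E.c2 _ _ _ _ (E.c4 _ _ (E.mc1 _ _ _ h1 h2)) le_rfl inf_le_left)


lemma exists_pair_of_Cd (E : EDC D) {a b : D} (hab : E.Cd a b) :
    ∃ Γ Δ : Set D, PrimeFilter Γ ∧ PrimeFilter Δ ∧ a ∉ Γ ∧ b ∉ Δ ∧ Rc E Γ Δ := by
  have hU : ∀ c : Set (Set D × Set D),
      c ⊆ {p : Set D × Set D | EDCIdeal p.1 ∧ EDCIdeal p.2 ∧ a ∈ p.1 ∧ b ∈ p.2 ∧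
        ∀ x ∈ p.1, ∀ y ∈ p.2, E.Cd x y} →
      IsChain (· ≤ ·) c → c.Nonempty →
      (EDCIdeal (⋃₀ (Prod.fst '' c), ⋃₀ (Prod.snd '' c)).1 ∧
       EDCIdeal (⋃₀ (Prod.fst '' c), ⋃₀ (Prod.snd '' c)).2 ∧
       a ∈ (⋃₀ (Prod.fst '' c), ⋃₀ (Prod.snd '' c)).1 ∧
       b ∈ (⋃₀ (Prod.fst '' c), ⋃₀ (Prod.snd '' c)).2 ∧
       ∀ x ∈ (⋃₀ (Prod.fst '' c), ⋃₀ (Prod.snd '' c)).1,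
       ∀ y ∈ (⋃₀ (Prod.fst '' c), ⋃₀ (Prod.snd '' c)).2, E.Cd x y) := by
    intro c hc hchain hne
    obtain ⟨p0, hp0⟩ := hne
    refine ⟨ideal_sUnion (hchain.image_of_map_rel _ _ _ (fun p q h => h.1)) ⟨p0.1, ⟨p0, hp0, rfl⟩⟩ ?_,
      ideal_sUnion (hchain.image_of_map_rel _ _ _ (fun p q h => h.2)) ⟨p0.2, ⟨p0, hp0, rfl⟩⟩ ?_,
      ⟨p0.1, ⟨p0, hp0, rfl⟩, (hc hp0).2.2.1⟩,
      ⟨p0.2, ⟨p0, hp0, rfl⟩, (hc hp0).2.2.2.1⟩,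
      cross_sUnion hchain (fun p hp => (hc hp).2.2.2.2)⟩
    · rintro s ⟨p, hp, rfl⟩; exact (hc hp).1
    · rintro s ⟨p, hp, rfl⟩; exact (hc hp).2.1
  obtain ⟨⟨P, Qi⟩, ⟨hP, hQ, haP, hbQ, hcross⟩, hsub1, hsub2, hmax⟩ :=
    zorn_pairs (fun p => EDCIdeal p.1 ∧ EDCIdeal p.2 ∧ a ∈ p.1 ∧ b ∈ p.2 ∧
        ∀ x ∈ p.1, ∀ y ∈ p.2, E.Cd x y) hU
      ({z | z ≤ a}, {z | z ≤ b})
      ⟨downSet_ideal a, downSet_ideal b, le_rfl, le_rfl,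
        fun x hx y hy => E.cd2 _ _ _ _ hab hx hy⟩
  have keyP : ∀ x, x ∉ P → ∃ p ∈ P, ∃ q ∈ Qi, ¬ E.Cd (p ⊔ x) q := by
    intro x hx
    by_contra hcon
    push_neg at hcon
    have heq := hmax ({z | ∃ p ∈ P, z ≤ p ⊔ x}, Qi)
      ⟨iext_ideal hP x, hQ, subset_iext x haP, hbQ, by
        rintro z ⟨p, hp, hzp⟩ y hy
        exact E.cd2 _ _ _ _ (hcon p hp y hy) hzp le_rfl⟩
      (subset_iext x) subset_rfl
    have h1 : {z | ∃ p ∈ P, z ≤ p ⊔ x} = P := congrArg Prod.fst heq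
    exact hx (h1 ▸ mem_iext hP x)
  have keyQ : ∀ y, y ∉ Qi → ∃ p ∈ P, ∃ q ∈ Qi, ¬ E.Cd p (q ⊔ y) := by
    intro y hy
    by_contra hcon
    push_neg at hcon
    have heq := hmax (P, {z | ∃ q ∈ Qi, z ≤ q ⊔ y})
      ⟨hP, iext_ideal hQ y, haP, subset_iext y hbQ, by
        rintro z hz w ⟨q, hq, hwq⟩
        exact E.cd2 _ _ _ _ (hcon z hz q hq) le_rfl hwq⟩
      subset_rfl (subset_iext y)
    have h1 : {z | ∃ q ∈ Qi, z ≤ q ⊔ y} = Qi := congrArg Prod.snd heq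
    exact hy (h1 ▸ mem_iext hQ y)
  have htopP : (⊤ : D) ∉ P := fun h0 => (E.cd1 _ _ (hcross _ h0 _ hbQ)).1 rfl
  have htopQ : (⊤ : D) ∉ Qi := fun h0 => (E.cd1 _ _ (hcross _ haP _ h0)).2 rfl
  have hprimeP : ∀ x y : D, x ⊓ y ∈ P → x ∈ P ∨ y ∈ P := by
    intro x y hxy
    by_contra hcon
    push_neg at hcon
    obtain ⟨p, hp, q, hq, hCd⟩ := keyP x hcon.1
    obtain ⟨p', hp', q', hq', hCd'⟩ := keyP y hcon.2
    have h1 : E.Cd ((p ⊔ p') ⊔ (x ⊓ y)) (q ⊔ q') :=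
      hcross _ (hP.2.2 _ _ (hP.2.2 _ _ hp hp') hxy) _ (hQ.2.2 _ _ hq hq')
    rw [sup_inf_left] at h1
    rcases E.cd3 _ _ _ (E.cd4 _ _ h1) with h2 | h2
    · exact hCd (E.cd2 _ _ _ _ (E.cd4 _ _ h2) (sup_le_sup_right le_sup_left x) le_sup_left)
    · exact hCd' (E.cd2 _ _ _ _ (E.cd4 _ _ h2) (sup_le_sup_right le_sup_right y) le_sup_right)
  have hprimeQ : ∀ x y : D, x ⊓ y ∈ Qi → x ∈ Qi ∨ y ∈ Qi := by
    intro x y hxy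
    by_contra hcon
    push_neg at hcon
    obtain ⟨p, hp, q, hq, hCd⟩ := keyQ x hcon.1
    obtain ⟨p', hp', q', hq', hCd'⟩ := keyQ y hcon.2
    have h1 : E.Cd (p ⊔ p') ((q ⊔ q') ⊔ (x ⊓ y)) :=
      hcross _ (hP.2.2 _ _ hp hp') _ (hQ.2.2 _ _ (hQ.2.2 _ _ hq hq') hxy)
    rw [sup_inf_left] at h1
    rcases E.cd3 _ _ _ h1 with h2 | h2
    · exact hCd (E.cd2 _ _ _ _ h2 le_sup_left (sup_le_sup_right le_sup_left x))
    · exact hCd' (E.cd2 _ _ _ _ h2 le_sup_right (sup_le_sup_right le_sup_right y))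
  refine ⟨{z | z ∉ P}, {z | z ∉ Qi}, ⟨⟨htopP, ?_, ?_⟩, ?_, ?_⟩, ⟨⟨htopQ, ?_, ?_⟩, ?_, ?_⟩,
    fun h => h haP, fun h => h hbQ, ?_⟩
  · intro x y hx hxy hy
    exact hx (hP.2.1 y x hy hxy)
  · intro x y hx hy hxy
    rcases hprimeP x y hxy with h | h
    exacts [hx h, hy h]
  · exact fun h => h hP.1
  · intro x y hxy
    by_contra hcon
    push_neg at hcon
    have hx : x ∈ P := not_not.mp hcon.1
    have hy : y ∈ P := not_not.mp hcon.2
    exact hxy (hP.2.2 _ _ hx hy)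
  · intro x y hx hxy hy
    exact hx (hQ.2.1 y x hy hxy)
  · intro x y hx hy hxy
    rcases hprimeQ x y hxy with h | h
    exacts [hx h, hy h]
  · exact fun h => h hQ.1
  · intro x y hxy
    by_contra hcon
    push_neg at hcon
    have hx : x ∈ Qi := not_not.mp hcon.1
    have hy : y ∈ Qi := not_not.mp hcon.2
    exact hxy (hQ.2.2 _ _ hx hy)
  intro u v
  refine ⟨?_, ?_, ?_, ?_⟩
  · intro hu hv
    obtain ⟨p, hp, q, hq, hCd⟩ := keyP u hu
    obtain ⟨p', hp', q', hq', hCd'⟩ := keyQ v hv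
    refine E.mcd2 (p ⊔ p') (q ⊔ q') v u ?_ ?_ ?_
    · intro h
      exact hCd' (E.cd2 _ _ _ _ h le_sup_right (sup_le_sup_right le_sup_right v))
    · exact hcross _ (hP.2.2 _ _ hp hp') _ (hQ.2.2 _ _ hq hq')
    · intro h
      exact hCd (E.cd2 _ _ _ _ h (sup_le_sup_right le_sup_left u) le_sup_left)
  · intro hu hv
    exact hcross _ (not_not.mp (fun h => hu h)) _ (not_not.mp (fun h => hv h))
  · intro hu hv hLl
    have hv' : v ∈ Qi := not_not.mp (fun h => hv h)
    obtain ⟨p, hp, q, hq, hCd⟩ := keyP u hu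
    have hqv : q ⊔ v ∈ Qi := hQ.2.2 _ _ hq hv'
    have h1 : E.Cd (q ⊔ v) p := E.cd4 _ _ (hcross _ hp _ hqv)
    have h2 : E.Ll u (q ⊔ v) := E.ll4 _ _ _ _ le_rfl hLl le_sup_right
    exact hCd (E.cd2 _ _ _ _ (E.cd4 _ _ (E.mcd1 _ _ _ h1 h2)) le_rfl le_sup_left)
  · intro hu hv hLl
    have hu' : u ∈ P := not_not.mp (fun h => hu h)
    obtain ⟨p, hp, q, hq, hCd⟩ := keyQ v hv
    have hpu : p ⊔ u ∈ P := hP.2.2 _ _ hp hu'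
    have h1 : E.Cd (p ⊔ u) q := hcross _ hpu _ hq
    have h2 : E.Ll v (p ⊔ u) := E.ll4 _ _ _ _ le_rfl hLl le_sup_right
    exact hCd (E.cd2 _ _ _ _ (E.mcd1 _ _ _ h1 h2) le_sup_left le_rfl)


lemma exists_pair_of_not_Ll (E : EDC D) {a b : D} (hab : ¬ E.Ll a b) :
    ∃ Γ Δ : Set D, PrimeFilter Γ ∧ PrimeFilter Δ ∧ a ∈ Γ ∧ b ∉ Δ ∧ Rc E Γ Δ := by
  have hU : ∀ c : Set (Set D × Set D),
      c ⊆ {p : Set D × Set D | EDCFilter p.1 ∧ EDCIdeal p.2 ∧ a ∈ p.1 ∧ b ∈ p.2 ∧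
        ∀ x ∈ p.1, ∀ y ∈ p.2, ¬ E.Ll x y} →
      IsChain (· ≤ ·) c → c.Nonempty →
      (EDCFilter (⋃₀ (Prod.fst '' c), ⋃₀ (Prod.snd '' c)).1 ∧
       EDCIdeal (⋃₀ (Prod.fst '' c), ⋃₀ (Prod.snd '' c)).2 ∧
       a ∈ (⋃₀ (Prod.fst '' c), ⋃₀ (Prod.snd '' c)).1 ∧
       b ∈ (⋃₀ (Prod.fst '' c), ⋃₀ (Prod.snd '' c)).2 ∧
       ∀ x ∈ (⋃₀ (Prod.fst '' c), ⋃₀ (Prod.snd '' c)).1,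
       ∀ y ∈ (⋃₀ (Prod.fst '' c), ⋃₀ (Prod.snd '' c)).2, ¬ E.Ll x y) := by
    intro c hc hchain hne
    obtain ⟨p0, hp0⟩ := hne
    refine ⟨filter_sUnion (hchain.image_of_map_rel _ _ _ (fun p q h => h.1)) ⟨p0.1, ⟨p0, hp0, rfl⟩⟩ ?_,
      ideal_sUnion (hchain.image_of_map_rel _ _ _ (fun p q h => h.2)) ⟨p0.2, ⟨p0, hp0, rfl⟩⟩ ?_,
      ⟨p0.1, ⟨p0, hp0, rfl⟩, (hc hp0).2.2.1⟩,
      ⟨p0.2, ⟨p0, hp0, rfl⟩, (hc hp0).2.2.2.1⟩,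
      cross_sUnion hchain (fun p hp => (hc hp).2.2.2.2)⟩
    · rintro s ⟨p, hp, rfl⟩; exact (hc hp).1
    · rintro s ⟨p, hp, rfl⟩; exact (hc hp).2.1
  obtain ⟨⟨F, Qi⟩, ⟨hF, hQ, haF, hbQ, hcross⟩, hsub1, hsub2, hmax⟩ :=
    zorn_pairs (fun p => EDCFilter p.1 ∧ EDCIdeal p.2 ∧ a ∈ p.1 ∧ b ∈ p.2 ∧
        ∀ x ∈ p.1, ∀ y ∈ p.2, ¬ E.Ll x y) hU
      ({z | a ≤ z}, {z | z ≤ b})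
      ⟨upSet_filter a, downSet_ideal b, le_rfl, le_rfl,
        fun x hx y hy hLl => hab (E.ll4 _ _ _ _ hx hLl hy)⟩
  have keyF : ∀ x, x ∉ F → ∃ f ∈ F, ∃ q ∈ Qi, E.Ll (f ⊓ x) q := by
    intro x hx
    by_contra hcon
    push_neg at hcon
    have heq := hmax ({z | ∃ f ∈ F, f ⊓ x ≤ z}, Qi)
      ⟨fext_filter hF x, hQ, subset_fext x haF, hbQ, by
        rintro z ⟨f, hf, hfz⟩ y hy hLl
        exact hcon f hf y hy (E.ll4 _ _ _ _ hfz hLl le_rfl)⟩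
      (subset_fext x) subset_rfl
    have h1 : {z | ∃ f ∈ F, f ⊓ x ≤ z} = F := congrArg Prod.fst heq
    exact hx (h1 ▸ mem_fext hF x)
  have keyQ : ∀ y, y ∉ Qi → ∃ f ∈ F, ∃ q ∈ Qi, E.Ll f (q ⊔ y) := by
    intro y hy
    by_contra hcon
    push_neg at hcon
    have heq := hmax (F, {z | ∃ q ∈ Qi, z ≤ q ⊔ y})
      ⟨hF, iext_ideal hQ y, haF, subset_iext y hbQ, by
        rintro z hz w ⟨q, hq, hwq⟩ hLl
        exact hcon z hz q hq (E.ll4 _ _ _ _ le_rfl hLl hwq)⟩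
      subset_rfl (subset_iext y)
    have h1 : {z | ∃ q ∈ Qi, z ≤ q ⊔ y} = Qi := congrArg Prod.snd heq
    exact hy (h1 ▸ mem_iext hQ y)
  have hbotF : (⊥ : D) ∉ F := fun h0 => hcross _ h0 _ hQ.1 E.ll1
  have htopQ : (⊤ : D) ∉ Qi := fun h0 => hcross _ hF.1 _ h0 E.ll2
  have hprimeF : ∀ x y : D, x ⊔ y ∈ F → x ∈ F ∨ y ∈ F := by
    intro x y hxy
    by_contra hcon
    push_neg at hcon
    obtain ⟨f, hf, q, hq, hLl1⟩ := keyF x hcon.1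
    obtain ⟨f', hf', q', hq', hLl2⟩ := keyF y hcon.2
    have h1 : E.Ll ((f ⊓ f') ⊓ x) (q ⊔ q') :=
      E.ll4 _ _ _ _ (inf_le_inf_right x inf_le_left) hLl1 le_sup_left
    have h2 : E.Ll ((f ⊓ f') ⊓ y) (q ⊔ q') :=
      E.ll4 _ _ _ _ (inf_le_inf_right y inf_le_right) hLl2 le_sup_right
    have h3 := E.ll5 _ _ _ h1 h2
    rw [← inf_sup_left] at h3
    exact hcross _ (hF.2.2 _ _ (hF.2.2 _ _ hf hf') hxy) _ (hQ.2.2 _ _ hq hq') h3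
  have hprimeQ : ∀ x y : D, x ⊓ y ∈ Qi → x ∈ Qi ∨ y ∈ Qi := by
    intro x y hxy
    by_contra hcon
    push_neg at hcon
    obtain ⟨f, hf, q, hq, hLl1⟩ := keyQ x hcon.1
    obtain ⟨f', hf', q', hq', hLl2⟩ := keyQ y hcon.2
    have h1 : E.Ll (f ⊓ f') ((q ⊔ q') ⊔ x) :=
      E.ll4 _ _ _ _ inf_le_left hLl1 (sup_le_sup_right le_sup_left x)
    have h2 : E.Ll (f ⊓ f') ((q ⊔ q') ⊔ y) :=
      E.ll4 _ _ _ _ inf_le_right hLl2 (sup_le_sup_right le_sup_right y)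
    have h3 := E.ll6 _ _ _ h1 h2
    rw [← sup_inf_left] at h3
    exact hcross _ (hF.2.2 _ _ hf hf') _ (hQ.2.2 _ _ (hQ.2.2 _ _ hq hq') hxy) h3
  refine ⟨F, {z | z ∉ Qi}, ⟨hF, hbotF, hprimeF⟩, ⟨⟨htopQ, ?_, ?_⟩, ?_, ?_⟩,
    haF, fun h => h hbQ, ?_⟩
  · intro x y hx hxy hy
    exact hx (hQ.2.1 y x hy hxy)
  · intro x y hx hy hxy
    rcases hprimeQ x y hxy with h | h
    exacts [hx h, hy h]
  · exact fun h => h hQ.1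
  · intro x y hxy
    by_contra hcon
    push_neg at hcon
    have hx : x ∈ Qi := not_not.mp hcon.1
    have hy : y ∈ Qi := not_not.mp hcon.2
    exact hxy (hQ.2.2 _ _ hx hy)
  intro u v
  refine ⟨?_, ?_, ?_, ?_⟩
  · intro hu hv
    by_contra hC
    obtain ⟨f, hf, q, hq, hLl⟩ := keyQ v hv
    have hfu : f ⊓ u ∈ F := hF.2.2 _ _ hf hu
    have h1 : E.Ll (f ⊓ u) (v ⊔ q) :=
      E.ll4 _ _ _ _ inf_le_left hLl (sup_comm q v).le
    have h2 : ¬ E.C v (f ⊓ u) := fun h => hC (E.c4 _ _ (E.c2 _ _ _ _ h le_rfl inf_le_right))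
    exact hcross _ hfu _ hq (E.mll2 v (f ⊓ u) q h2 h1)
  · intro hu hv
    have hv' : v ∈ Qi := not_not.mp (fun h => hv h)
    by_contra hCd
    obtain ⟨f, hf, q, hq, hLl⟩ := keyF u hu
    have h1 : E.Ll (u ⊓ f) (q ⊔ v) :=
      E.ll4 _ _ _ _ (inf_comm u f).le hLl le_sup_left
    have h2 : ¬ E.Cd u (q ⊔ v) := fun h => hCd (E.cd2 _ _ _ _ h le_rfl le_sup_right)
    exact hcross _ hf _ (hQ.2.2 _ _ hq hv') (E.mll1 u (q ⊔ v) f h2 h1)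
  · intro hu hv hLl
    exact hcross _ hu _ (not_not.mp (fun h => hv h)) hLl
  · intro hu hv hLl
    obtain ⟨f, hf, q, hq, hLl1⟩ := keyF u hu
    obtain ⟨f', hf', q', hq', hLl2⟩ := keyQ v hv
    have hle : u ⊓ (f ⊓ f') ≤ f ⊓ u :=
      le_inf (inf_le_right.trans inf_le_left) inf_le_left
    have h1 : E.Ll (u ⊓ (f ⊓ f')) (q ⊔ q') := E.ll4 _ _ _ _ hle hLl1 le_sup_left
    have h2 : E.Ll (f ⊓ f') (v ⊔ (q ⊔ q')) :=
      E.ll4 _ _ _ _ inf_le_right hLl2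
        (sup_le (le_sup_right.trans le_sup_right) le_sup_left)
    have h3 := E.ll7 v u (f ⊓ f') (q ⊔ q') hLl h1 h2
    exact hcross _ (hF.2.2 _ _ hf hf') _ (hQ.2.2 _ _ hq hq') h3

lemma exists_primeFilter_sep {a b : D} (hab : ¬ a ≤ b) :
    ∃ Γ : Set D, PrimeFilter Γ ∧ a ∈ Γ ∧ b ∉ Γ := by
  have hU : ∀ c : Set (Set D × Set D),
      c ⊆ {p : Set D × Set D | EDCFilter p.1 ∧ EDCIdeal p.2 ∧ a ∈ p.1 ∧ b ∈ p.2 ∧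
        ∀ x ∈ p.1, ∀ y ∈ p.2, x ≠ y} →
      IsChain (· ≤ ·) c → c.Nonempty →
      (EDCFilter (⋃₀ (Prod.fst '' c), ⋃₀ (Prod.snd '' c)).1 ∧
       EDCIdeal (⋃₀ (Prod.fst '' c), ⋃₀ (Prod.snd '' c)).2 ∧
       a ∈ (⋃₀ (Prod.fst '' c), ⋃₀ (Prod.snd '' c)).1 ∧
       b ∈ (⋃₀ (Prod.fst '' c), ⋃₀ (Prod.snd '' c)).2 ∧
       ∀ x ∈ (⋃₀ (Prod.fst '' c), ⋃₀ (Prod.snd '' c)).1,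
       ∀ y ∈ (⋃₀ (Prod.fst '' c), ⋃₀ (Prod.snd '' c)).2, x ≠ y) := by
    intro c hc hchain hne
    obtain ⟨p0, hp0⟩ := hne
    refine ⟨filter_sUnion (hchain.image_of_map_rel _ _ _ (fun p q h => h.1)) ⟨p0.1, ⟨p0, hp0, rfl⟩⟩ ?_,
      ideal_sUnion (hchain.image_of_map_rel _ _ _ (fun p q h => h.2)) ⟨p0.2, ⟨p0, hp0, rfl⟩⟩ ?_,
      ⟨p0.1, ⟨p0, hp0, rfl⟩, (hc hp0).2.2.1⟩,
      ⟨p0.2, ⟨p0, hp0, rfl⟩, (hc hp0).2.2.2.1⟩,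
      cross_sUnion hchain (fun p hp => (hc hp).2.2.2.2)⟩
    · rintro s ⟨p, hp, rfl⟩; exact (hc hp).1
    · rintro s ⟨p, hp, rfl⟩; exact (hc hp).2.1
  obtain ⟨⟨F, Qi⟩, ⟨hF, hQ, haF, hbQ, hcross⟩, hsub1, hsub2, hmax⟩ :=
    zorn_pairs (fun p => EDCFilter p.1 ∧ EDCIdeal p.2 ∧ a ∈ p.1 ∧ b ∈ p.2 ∧
        ∀ x ∈ p.1, ∀ y ∈ p.2, x ≠ y) hU
      ({z | a ≤ z}, {z | z ≤ b})
      ⟨upSet_filter a, downSet_ideal b, le_rfl, le_rfl,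
        fun x hx y hy hxy => hab (le_trans hx (hxy ▸ hy))⟩
  have hdisj : ∀ z : D, z ∈ F → z ∈ Qi → False := fun z h1 h2 => hcross _ h1 _ h2 rfl
  have keyF : ∀ x, x ∉ F → ∃ f ∈ F, f ⊓ x ∈ Qi := by
    intro x hx
    by_contra hcon
    push_neg at hcon
    have heq := hmax ({z | ∃ f ∈ F, f ⊓ x ≤ z}, Qi)
      ⟨fext_filter hF x, hQ, subset_fext x haF, hbQ, by
        rintro z ⟨f, hf, hfz⟩ y hy hzy
        exact hcon f hf (hQ.2.1 y (f ⊓ x) hy (hzy ▸ hfz))⟩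
      (subset_fext x) subset_rfl
    have h1 : {z | ∃ f ∈ F, f ⊓ x ≤ z} = F := congrArg Prod.fst heq
    exact hx (h1 ▸ mem_fext hF x)
  have hbotF : (⊥ : D) ∉ F := fun h0 => hdisj ⊥ h0 hQ.1
  have hprimeF : ∀ x y : D, x ⊔ y ∈ F → x ∈ F ∨ y ∈ F := by
    intro x y hxy
    by_contra hcon
    push_neg at hcon
    obtain ⟨f, hf, h1⟩ := keyF x hcon.1
    obtain ⟨f', hf', h2⟩ := keyF y hcon.2
    have h3 : (f ⊓ f') ⊓ (x ⊔ y) ∈ Qi := by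
      rw [inf_sup_left]
      exact hQ.2.2 _ _ (hQ.2.1 _ _ h1 (inf_le_inf_right x inf_le_left))
        (hQ.2.1 _ _ h2 (inf_le_inf_right y inf_le_right))
    exact hdisj _ (hF.2.2 _ _ (hF.2.2 _ _ hf hf') hxy) h3
  exact ⟨F, ⟨hF, hbotF, hprimeF⟩, haF, fun h => hdisj b h hbQ⟩

lemma rc_refl (E : EDC D) {Γ : Set D} (hΓ : PrimeFilter Γ) : Rc E Γ Γ := by
  intro u v
  refine ⟨?_, ?_, ?_, ?_⟩
  · intro hu hv
    refine E.c5 _ _ (fun h0 => hΓ.2.1 ?_)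
    rw [← h0]
    exact hΓ.1.2.2 _ _ hu hv
  · intro hu hv
    refine E.cd5 _ _ (fun h1 => ?_)
    rcases hΓ.2.2 u v (by rw [h1]; exact hΓ.1.1) with h | h
    exacts [hu h, hv h]
  · intro hu hv hLl
    exact hv (hΓ.1.2.1 _ _ hu (E.ll3 _ _ hLl))
  · intro hu hv hLl
    exact hu (hΓ.1.2.1 _ _ hv (E.ll3 _ _ hLl))

lemma rc_symm (E : EDC D) {Γ Δ : Set D} (h : Rc E Γ Δ) : Rc E Δ Γ := by
  intro u v
  exact ⟨fun hu hv => E.c4 _ _ ((h v u).1 hv hu),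
         fun hu hv => E.cd4 _ _ ((h v u).2.1 hv hu),
         fun hu hv => (h v u).2.2.2 hv hu,
         fun hu hv => (h v u).2.2.1 hv hu⟩

end EDCRep

/-- relational representation theorem for EDC-lattices. -/


theorem stmt8 {D : Type u} [DistribLattice D] [BoundedOrder D] (E : EDC D) :
    ∃ (W : Type u) (R : W → W → Prop) (h : D → Set W),
      (∀ x, R x x) ∧ (∀ x y, R x y → R y x) ∧
      Function.Injective h ∧
      h ⊥ = ∅ ∧ h ⊤ = Set.univ ∧
      (∀ a b : D, h (a ⊔ b) = h a ∪ h b) ∧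
      (∀ a b : D, h (a ⊓ b) = h a ∩ h b) ∧
      (∀ a b : D, E.C a b ↔ ∃ x ∈ h a, ∃ y ∈ h b, R x y) ∧
      (∀ a b : D, E.Cd a b ↔ ∃ x ∉ h a, ∃ y ∉ h b, R x y) ∧
      (∀ a b : D, E.Ll a b ↔ ¬ ∃ x ∈ h a, ∃ y ∉ h b, R x y) := by
  classical
  refine ⟨{Γ : Set D // PrimeFilter Γ}, fun U V => Rc E U.1 V.1,
    fun a => {U : {Γ : Set D // PrimeFilter Γ} | a ∈ U.1}, ?_, ?_, ?_, ?_, ?_, ?_, ?_, ?_, ?_, ?_⟩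
  · exact fun U => EDCRep.rc_refl E U.2
  · exact fun U V h => EDCRep.rc_symm E h
  · intro x y hxy
    by_contra hne
    have hle : ¬ x ≤ y ∨ ¬ y ≤ x := by
      by_contra hcon
      push_neg at hcon
      exact hne (le_antisymm hcon.1 hcon.2)
    have hxy' : {U : {Γ : Set D // PrimeFilter Γ} | x ∈ U.1} =
        {U : {Γ : Set D // PrimeFilter Γ} | y ∈ U.1} := hxy
    rcases hle with h | h
    · obtain ⟨Γ, hΓ, hx, hy⟩ := EDCRep.exists_primeFilter_sep h
      exact hy ((Set.ext_iff.mp hxy' ⟨Γ, hΓ⟩).mp hx)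
    · obtain ⟨Γ, hΓ, hx, hy⟩ := EDCRep.exists_primeFilter_sep h
      exact hy ((Set.ext_iff.mp hxy' ⟨Γ, hΓ⟩).mpr hx)
  · ext U
    simp only [Set.mem_setOf_eq, Set.mem_empty_iff_false, iff_false]
    exact U.2.2.1
  · ext U
    simp only [Set.mem_setOf_eq, Set.mem_univ, iff_true]
    exact U.2.1.1
  · intro a b
    ext U
    simp only [Set.mem_setOf_eq, Set.mem_union]
    constructor
    · exact fun h => U.2.2.2 a b h
    · rintro (h | h)
      · exact U.2.1.2.1 a (a ⊔ b) h le_sup_left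
      · exact U.2.1.2.1 b (a ⊔ b) h le_sup_right
  · intro a b
    ext U
    simp only [Set.mem_setOf_eq, Set.mem_inter_iff]
    constructor
    · exact fun h => ⟨U.2.1.2.1 _ _ h inf_le_left, U.2.1.2.1 _ _ h inf_le_right⟩
    · exact fun h => U.2.1.2.2 a b h.1 h.2
  · intro a b
    constructor
    · intro hC
      obtain ⟨Γ, Δ, hΓ, hΔ, ha, hb, hR⟩ := EDCRep.exists_pair_of_C E hC
      exact ⟨⟨Γ, hΓ⟩, ha, ⟨Δ, hΔ⟩, hb, hR⟩
    · rintro ⟨U, hU, V, hV, hR⟩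
      exact (hR a b).1 hU hV
  · intro a b
    constructor
    · intro hCd
      obtain ⟨Γ, Δ, hΓ, hΔ, ha, hb, hR⟩ := EDCRep.exists_pair_of_Cd E hCd
      exact ⟨⟨Γ, hΓ⟩, ha, ⟨Δ, hΔ⟩, hb, hR⟩
    · rintro ⟨U, hU, V, hV, hR⟩
      exact (hR a b).2.1 hU hV
  · intro a b
    constructor
    · rintro hLl ⟨U, hU, V, hV, hR⟩
      exact (hR a b).2.2.1 hU hV hLl
    · intro hno
      by_contra hLl
      obtain ⟨Γ, Δ, hΓ, hΔ, ha, hb, hR⟩ := EDCRep.exists_pair_of_not_Ll E hLl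
      exact hno ⟨⟨Γ, hΓ⟩, ha, ⟨Δ, hΔ⟩, hb, hR⟩
end

section
/- Let D be an EDC-lattice satisfying the axioms (U-rich ≪): a ≪ b → ∃c, b + c = 1 and ¬(a C c); and (U-rich Ĉ): ¬(a Ĉ b) → ∃c ∃d, a + c = 1, b + d = 1 and ¬(c C d). Then for all prime filters U, V of D: U R_C V if and only if U R^c V, where U R_C V means that a C b holds for all a ∈ U and b ∈ V. -/
universe u

/-- under (U-rich ≪) and (U-rich Ĉ), the relation `R_C` coincides with `R^c`
on prime filters. -/
theorem stmt10 {D : Type u} [DistribLattice D] [BoundedOrder D] (E : EDC D)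
    (hUll : ∀ a b : D, E.Ll a b → ∃ c : D, b ⊔ c = ⊤ ∧ ¬ E.C a c)
    (hUcd : ∀ a b : D, ¬ E.Cd a b → ∃ c d : D, a ⊔ c = ⊤ ∧ b ⊔ d = ⊤ ∧ ¬ E.C c d)
    (U V : Set D) (hU : PrimeFilter U) (hV : PrimeFilter V) :
    (∀ a ∈ U, ∀ b ∈ V, E.C a b) ↔ Rc E U V := by
  constructor
  · intro h a b
    refine ⟨fun ha hb => h a ha b hb, ?_, ?_, ?_⟩
    · intro ha hb
      by_contra hcd
      obtain ⟨c, d, hac, hbd, hncd⟩ := hUcd a b hcd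
      have hcU : c ∈ U := by
        rcases hU.2.2 a c (by rw [hac]; exact hU.1.1) with h' | h'
        · exact absurd h' ha
        · exact h'
      have hdV : d ∈ V := by
        rcases hV.2.2 b d (by rw [hbd]; exact hV.1.1) with h' | h'
        · exact absurd h' hb
        · exact h'
      exact hncd (h c hcU d hdV)
    · intro ha hb hll
      obtain ⟨c, hbc, hnc⟩ := hUll a b hll
      have hcV : c ∈ V := by
        rcases hV.2.2 b c (by rw [hbc]; exact hV.1.1) with h' | h'
        · exact absurd h' hb
        · exact h'
      exact hnc (h a ha c hcV)
    · intro ha hb hll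
      obtain ⟨c, hac, hnc⟩ := hUll b a hll
      have hcU : c ∈ U := by
        rcases hU.2.2 a c (by rw [hac]; exact hU.1.1) with h' | h'
        · exact absurd h' ha
        · exact h'
      exact hnc (E.c4 _ _ (h c hcU b hb))
  · intro h a ha b hb
    exact (h a b).1 ha hb
end

section
/- Transitivity lemma: Let D be an EDC-lattice satisfying the normality axioms (Nor 1): ¬(a C b) → ∃c ∃d, c + d = 1, ¬(a C c) and ¬(b C d); (Nor 2): ¬(a Ĉ b) → ∃c ∃d, c·d = 0, ¬(a Ĉ c) and ¬(b Ĉ d); and (Nor 3): a ≪ b → ∃c, a ≪ c and c ≪ b. Then the canonical relation R^c on the prime filters of D is transitive. -/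
universe u

/-- Transitivity lemma — under (Nor 1), (Nor 2), (Nor 3) the canonical
relation `R^c` is transitive on prime filters. -/
theorem stmt11 {D : Type u} [DistribLattice D] [BoundedOrder D] (E : EDC D)
    (nor1 : ∀ a b : D, ¬ E.C a b → ∃ c d : D, c ⊔ d = ⊤ ∧ ¬ E.C a c ∧ ¬ E.C b d)
    (nor2 : ∀ a b : D, ¬ E.Cd a b → ∃ c d : D, c ⊓ d = ⊥ ∧ ¬ E.Cd a c ∧ ¬ E.Cd b d)
    (nor3 : ∀ a b : D, E.Ll a b → ∃ c : D, E.Ll a c ∧ E.Ll c b)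
    (Γ Δ Θ : Set D) (hΓ : PrimeFilter Γ) (hΔ : PrimeFilter Δ) (hΘ : PrimeFilter Θ)
    (h1 : Rc E Γ Δ) (h2 : Rc E Δ Θ) : Rc E Γ Θ := by
  intro a b
  refine ⟨?_, ?_, ?_, ?_⟩
  · intro ha hb
    by_contra hC
    obtain ⟨c, d, hcd, hac, hbd⟩ := nor1 a b hC
    have : c ⊔ d ∈ Δ := by rw [hcd]; exact hΔ.1.1
    rcases hΔ.2.2 c d this with hc | hd
    · exact hac ((h1 a c).1 ha hc)
    · exact hbd (E.c4 _ _ ((h2 d b).1 hd hb))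
  · intro ha hb
    by_contra hC
    obtain ⟨c, d, hcd, hac, hbd⟩ := nor2 a b hC
    by_cases hc : c ∈ Δ
    · by_cases hd : d ∈ Δ
      · have : c ⊓ d ∈ Δ := hΔ.1.2.2 c d hc hd
        rw [hcd] at this
        exact hΔ.2.1 this
      · exact hbd (E.cd4 _ _ ((h2 d b).2.1 hd hb))
    · exact hac ((h1 a c).2.1 ha hc)
  · intro ha hb hL
    obtain ⟨c, hac, hcb⟩ := nor3 a b hL
    by_cases hc : c ∈ Δ
    · exact (h2 c b).2.2.1 hc hb hcb
    · exact (h1 a c).2.2.1 ha hc hac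
  · intro ha hb hL
    obtain ⟨c, hbc, hca⟩ := nor3 b a hL
    by_cases hc : c ∈ Δ
    · exact (h1 a c).2.2.2 ha hc hca
    · exact (h2 c b).2.2.2 hc hb hbc
end

section
/- Let D be an EDC-lattice, Γ a clan of D and a ∈ D. Then the following are equivalent: (i) for all c ∈ D, a + c = 1 implies c ∈ Γ; (ii) there exists a prime filter U of D with U ⊆ Γ and a ∉ U. -/
universe u

/-- A clan of an EDC-lattice. -/
def IsClan {D : Type u} [DistribLattice D] [BoundedOrder D] (E : EDC D) (Γ : Set D) : Prop :=
  ⊤ ∈ Γ ∧ ⊥ ∉ Γ ∧ (∀ a b : D, a ∈ Γ → a ≤ b → b ∈ Γ) ∧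
    (∀ a b : D, a ⊔ b ∈ Γ → a ∈ Γ ∨ b ∈ Γ) ∧ (∀ a b : D, a ∈ Γ → b ∈ Γ → E.C a b)

/-- for a clan `Γ` and `a ∈ D`, `(∀ c, a + c = 1 → c ∈ Γ)` iff there is a
prime filter `U ⊆ Γ` with `a ∉ U`. -/
theorem stmt12 {D : Type u} [DistribLattice D] [BoundedOrder D] (E : EDC D)
    (Γ : Set D) (hΓ : IsClan E Γ) (a : D) :
    (∀ c : D, a ⊔ c = ⊤ → c ∈ Γ) ↔ ∃ U : Set D, PrimeFilter U ∧ U ⊆ Γ ∧ a ∉ U := by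
  constructor
  · intro h
    have ha : a ≠ ⊤ := by
      intro h'
      exact hΓ.2.1 (h ⊥ (by simp [h']))
    -- ideal J generated by Γᶜ and a
    set J : Set D := {x | ∃ y, y ∉ Γ ∧ x ≤ y ⊔ a} with hJ
    have hJideal : Order.IsIdeal J := by
      refine ⟨?_, ⟨⊥, ⊥, hΓ.2.1, bot_le⟩, ?_⟩
      · rintro x₁ x₂ hle ⟨y, hy, hx⟩
        exact ⟨y, hy, hle.trans hx⟩
      · rintro x₁ ⟨y₁, hy₁, hx₁⟩ x₂ ⟨y₂, hy₂, hx₂⟩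
        refine ⟨x₁ ⊔ x₂, ⟨y₁ ⊔ y₂, ?_, ?_⟩, le_sup_left, le_sup_right⟩
        · intro hmem
          rcases hΓ.2.2.2.1 y₁ y₂ hmem with h' | h'
          · exact hy₁ h'
          · exact hy₂ h'
        · exact sup_le (hx₁.trans (sup_le_sup_right le_sup_left a))
            (hx₂.trans (sup_le_sup_right le_sup_right a))
    -- filter F₀ = {c | a ⊔ c = ⊤}
    set F₀ : Set D := {c | a ⊔ c = ⊤} with hF₀
    have hF₀filter : Order.IsPFilter F₀ := by
      refine Order.IsPFilter.of_def ⟨⊤, by simp [hF₀]⟩ ?_ ?_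
      · rintro c₁ hc₁ c₂ hc₂
        refine ⟨c₁ ⊓ c₂, ?_, inf_le_left, inf_le_right⟩
        show a ⊔ (c₁ ⊓ c₂) = ⊤
        rw [sup_inf_left, hc₁, hc₂, top_inf_eq]
      · intro x y hxy hx
        exact top_le_iff.1 (by rw [← hx]; exact sup_le_sup_left hxy a)
    have hdisj : Disjoint (hF₀filter.toPFilter : Set D) (hJideal.toIdeal : Set D) := by
      rw [Set.disjoint_left]
      rintro c hc ⟨y, hy, hcy⟩
      apply hy
      apply h
      have : (⊤ : D) ≤ a ⊔ y := by
        calc (⊤ : D) = a ⊔ c := hc.symm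
        _ ≤ a ⊔ (y ⊔ a) := sup_le_sup_left hcy a
        _ ≤ a ⊔ y := by rw [sup_comm y a, ← sup_assoc, sup_idem]
      exact top_le_iff.1 this
    obtain ⟨J', hJ'prime, hJJ', hdisj'⟩ :=
      DistribLattice.prime_ideal_of_disjoint_filter_ideal hdisj
    refine ⟨(J' : Set D)ᶜ, ⟨⟨?_, ?_, ?_⟩, ?_, ?_⟩, ?_, ?_⟩
    · -- ⊤ ∈ U
      intro hmem
      exact Set.disjoint_left.1 hdisj' (show ⊤ ∈ F₀ by simp [hF₀]) hmem
    · intro x b hx hxb hb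
      exact hx (J'.lower hxb hb)
    · intro x y hx hy
      intro hmem
      rcases hJ'prime.mem_or_mem hmem with h' | h'
      · exact hx h'
      · exact hy h'
    · simp [J'.bot_mem]
    · intro x y hxy
      by_contra hcon
      push_neg at hcon
      simp only [Set.mem_compl_iff, not_not] at hcon
      exact hxy (Order.Ideal.sup_mem hcon.1 hcon.2)
    · intro u hu
      by_contra hucon
      exact hu (hJJ' ⟨u, hucon, le_sup_left⟩)
    · intro hmem
      exact hmem (hJJ' ⟨⊥, hΓ.2.1, by simp⟩)
  · rintro ⟨U, ⟨⟨htop, hup, _⟩, _, hprime⟩, hUΓ, haU⟩ c hac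
    rcases hprime a c (by rw [hac]; exact htop) with h' | h'
    · exact absurd h' haU
    · exact hUΓ h'
end

section
/- Let D be an EDC-lattice, B a Boolean algebra equipped with a relation C' satisfying axioms (C1)–(C5), with dual contact defined in B by x Ĉ' y iff xᶜ C' yᶜ and nontangential part-of by x ≪' y iff ¬(x C' yᶜ). Let h : D → B be an injective bounded lattice homomorphism such that for all a, b ∈ D: a C b iff h(a) C' h(b), a Ĉ b iff h(a) Ĉ' h(b), and a ≪ b iff h(a) ≪' h(b). If the image h(D) is a C-separable EDC-sublattice of B, then D satisfies (U-rich ≪): a ≪ b → ∃c, b + c = 1 and ¬(a C c), and (U-rich Ĉ): ¬(a Ĉ b) → ∃c ∃d, a + c = 1, b + d = 1 and ¬(c C d). -/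
universe u

/-- `S` is a C-separable EDC-sublattice (with respect to relations `C`, `Cd`, `Ll`). -/
def CSepSub {D : Type u} [DistribLattice D] [BoundedOrder D]
    (C Cd Ll : D → D → Prop) (S : Set D) : Prop :=
  (∀ a₂ b₂ : D, ¬ C a₂ b₂ → ∃ a₁ ∈ S, ∃ b₁ ∈ S, a₂ ≤ a₁ ∧ b₂ ≤ b₁ ∧ ¬ C a₁ b₁) ∧
  (∀ a₂ b₂ : D, ¬ Cd a₂ b₂ → ∃ a₁ ∈ S, ∃ b₁ ∈ S, a₂ ⊔ a₁ = ⊤ ∧ b₂ ⊔ b₁ = ⊤ ∧ ¬ C a₁ b₁) ∧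
  (∀ a₂ b₂ : D, Ll a₂ b₂ → ∃ a₁ ∈ S, ∃ b₁ ∈ S, a₂ ≤ a₁ ∧ b₂ ⊔ b₁ = ⊤ ∧ ¬ C a₁ b₁)

/-- if an EDC-lattice embeds into a contact algebra with C-separable image,
then it satisfies (U-rich ≪) and (U-rich Ĉ). -/
theorem stmt14 {D : Type u} [DistribLattice D] [BoundedOrder D] (E : EDC D)
    {B : Type u} [BooleanAlgebra B] (C' : B → B → Prop)
    (c1 : ∀ x y : B, C' x y → x ≠ ⊥ ∧ y ≠ ⊥)
    (c2 : ∀ x x' y y' : B, C' x y → x ≤ x' → y ≤ y' → C' x' y')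
    (c3 : ∀ x y z : B, C' x (y ⊔ z) → C' x y ∨ C' x z)
    (c4 : ∀ x y : B, C' x y → C' y x)
    (c5 : ∀ x y : B, x ⊓ y ≠ ⊥ → C' x y)
    (h : D → B) (hinj : Function.Injective h)
    (hbot : h ⊥ = ⊥) (htop : h ⊤ = ⊤)
    (hsup : ∀ a b : D, h (a ⊔ b) = h a ⊔ h b) (hinf : ∀ a b : D, h (a ⊓ b) = h a ⊓ h b)
    (hC : ∀ a b : D, E.C a b ↔ C' (h a) (h b))
    (hCd : ∀ a b : D, E.Cd a b ↔ C' (h a)ᶜ (h b)ᶜ)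
    (hLl : ∀ a b : D, E.Ll a b ↔ ¬ C' (h a) (h b)ᶜ)
    (hsep : CSepSub C' (fun x y => C' xᶜ yᶜ) (fun x y => ¬ C' x yᶜ) (Set.range h)) :
    (∀ a b : D, E.Ll a b → ∃ c : D, b ⊔ c = ⊤ ∧ ¬ E.C a c) ∧
    (∀ a b : D, ¬ E.Cd a b → ∃ c d : D, a ⊔ c = ⊤ ∧ b ⊔ d = ⊤ ∧ ¬ E.C c d) := by
  obtain ⟨sepC, sepCd, sepLl⟩ := hsep
  constructor
  · intro a b hab
    obtain ⟨a₁, ⟨a', rfl⟩, b₁, ⟨b', rfl⟩, hle, htop', hnc⟩ :=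
      sepLl (h a) (h b) ((hLl a b).1 hab)
    refine ⟨b', hinj (by rw [hsup, htop]; exact htop'), ?_⟩
    intro hc
    exact hnc (c2 _ _ _ _ ((hC a b').1 hc) hle le_rfl)
  · intro a b hab
    obtain ⟨a₁, ⟨c, rfl⟩, b₁, ⟨d, rfl⟩, ht1, ht2, hnc⟩ :=
      sepCd (h a) (h b) (fun hx => hab ((hCd a b).2 hx))
    exact ⟨c, d, hinj (by rw [hsup, htop]; exact ht1),
      hinj (by rw [hsup, htop]; exact ht2), fun hc => hnc ((hC c d).1 hc)⟩
end

section
/- Topological representation theorem for EDC-lattices: Let D be an EDC-lattice. Then there exist a topological space X and a map h : D → (subsets of X) such that: every h(a) is regular closed; h is injective; h(0) = ∅, h(1) = X; h(a+b) = h(a) ∪ h(b); h(a·b) = Cl(Int(h(a) ∩ h(b))); a ≤ b iff h(a) ⊆ h(b); and for all a, b ∈ D: a C b iff h(a) ∩ h(b) ≠ ∅; a Ĉ b iff Int(h(a)) ∪ Int(h(b)) ≠ X; a ≪ b iff h(a) ⊆ Int(h(b)). -/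
universe u

section PairExt

variable {α β : Type u} [DistribLattice α] [BoundedOrder α] [DistribLattice β] [BoundedOrder β]

theorem pairExt (φ : α → β → Prop)
    (hm : ∀ {x x' y y'}, φ x y → x ≤ x' → y ≤ y' → φ x' y')
    (hs1 : ∀ p q y, φ (p ⊔ q) y → φ p y ∨ φ q y)
    (hs2 : ∀ x p q, φ x (p ⊔ q) → φ x p ∨ φ x q)
    (hb1 : ∀ y, ¬ φ ⊥ y) (hb2 : ∀ x, ¬ φ x ⊥)
    {a : α} {b : β} (hab : φ a b) :
    ∃ (Γ : Set α) (Δ : Set β), a ∈ Γ ∧ b ∈ Δ ∧ PrimeFilter Γ ∧ PrimeFilter Δ ∧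
      (∀ x ∈ Γ, ∀ y ∈ Δ, φ x y) ∧
      (∀ x, x ∉ Γ → ∃ u ∈ Γ, ∃ v ∈ Δ, ¬ φ (u ⊓ x) v) ∧
      (∀ y, y ∉ Δ → ∃ u ∈ Γ, ∃ v ∈ Δ, ¬ φ u (v ⊓ y)) := by
  classical
  set S : Set (Set α × Set β) :=
    {P | EDCFilter P.1 ∧ EDCFilter P.2 ∧ (∀ x ∈ P.1, ∀ y ∈ P.2, φ x y)} with hS
  have hstart : ((Set.Ici a, Set.Ici b) : Set α × Set β) ∈ S := by
    refine ⟨⟨le_top, fun x y hx hxy => le_trans hx hxy, fun x y hx hy => le_inf hx hy⟩,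
      ⟨le_top, fun x y hx hxy => le_trans hx hxy, fun x y hx hy => le_inf hx hy⟩, ?_⟩
    intro x hx y hy
    exact hm hab hx hy
  have hchain : ∀ c ⊆ S, IsChain (· ≤ ·) c → ∀ P ∈ c, ∃ ub ∈ S, ∀ z ∈ c, z ≤ ub := by
    intro c hcS hchain P hPc
    refine ⟨(⋃ Q ∈ c, Q.1, ⋃ Q ∈ c, Q.2), ⟨?_, ?_, ?_⟩, ?_⟩
    · refine ⟨Set.mem_biUnion hPc (hcS hPc).1.1, ?_, ?_⟩
      · rintro x y hx hxy
        obtain ⟨Q, hQ, hxQ⟩ := Set.mem_iUnion₂.mp hx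
        exact Set.mem_biUnion hQ ((hcS hQ).1.2.1 _ _ hxQ hxy)
      · rintro x y hx hy
        obtain ⟨Q, hQ, hxQ⟩ := Set.mem_iUnion₂.mp hx
        obtain ⟨R, hR, hyR⟩ := Set.mem_iUnion₂.mp hy
        rcases hchain.total hQ hR with h | h
        · exact Set.mem_biUnion hR ((hcS hR).1.2.2 _ _ (h.1 hxQ) hyR)
        · exact Set.mem_biUnion hQ ((hcS hQ).1.2.2 _ _ hxQ (h.1 hyR))
    · refine ⟨Set.mem_biUnion hPc (hcS hPc).2.1.1, ?_, ?_⟩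
      · rintro x y hx hxy
        obtain ⟨Q, hQ, hxQ⟩ := Set.mem_iUnion₂.mp hx
        exact Set.mem_biUnion hQ ((hcS hQ).2.1.2.1 _ _ hxQ hxy)
      · rintro x y hx hy
        obtain ⟨Q, hQ, hxQ⟩ := Set.mem_iUnion₂.mp hx
        obtain ⟨R, hR, hyR⟩ := Set.mem_iUnion₂.mp hy
        rcases hchain.total hQ hR with h | h
        · exact Set.mem_biUnion hR ((hcS hR).2.1.2.2 _ _ (h.2 hxQ) hyR)
        · exact Set.mem_biUnion hQ ((hcS hQ).2.1.2.2 _ _ hxQ (h.2 hyR))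
    · intro x hx y hy
      obtain ⟨Q, hQ, hxQ⟩ := Set.mem_iUnion₂.mp hx
      obtain ⟨R, hR, hyR⟩ := Set.mem_iUnion₂.mp hy
      rcases hchain.total hQ hR with h | h
      · exact (hcS hR).2.2 _ (h.1 hxQ) _ hyR
      · exact (hcS hQ).2.2 _ hxQ _ (h.2 hyR)
    · intro z hz
      exact ⟨fun t ht => Set.mem_biUnion hz ht, fun t ht => Set.mem_biUnion hz ht⟩
  obtain ⟨M, hMge, hMmax⟩ := zorn_le_nonempty₀ S hchain _ hstart
  obtain ⟨hF1, hF2, hcond⟩ := hMmax.prop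
  have haM : a ∈ M.1 := hMge.1 le_rfl
  have hbM : b ∈ M.2 := hMge.2 le_rfl
  -- obstruction on side 1
  have obs1 : ∀ x, x ∉ M.1 → ∃ u ∈ M.1, ∃ v ∈ M.2, ¬ φ (u ⊓ x) v := by
    intro x hx
    by_contra hno
    push_neg at hno
    have hext : ((({z | ∃ u ∈ M.1, u ⊓ x ≤ z}, M.2)) : Set α × Set β) ∈ S := by
      refine ⟨⟨⟨⊤, hF1.1, le_top⟩, ?_, ?_⟩, hF2, ?_⟩
      · rintro z w ⟨u, hu, huz⟩ hzw
        exact ⟨u, hu, le_trans huz hzw⟩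
      · rintro z w ⟨u, hu, huz⟩ ⟨u', hu', hu'w⟩
        exact ⟨u ⊓ u', hF1.2.2 _ _ hu hu',
          le_inf (le_trans (inf_le_inf inf_le_left le_rfl) huz)
            (le_trans (inf_le_inf inf_le_right le_rfl) hu'w)⟩
      · rintro z ⟨u, hu, huz⟩ y hy
        exact hm (hno u hu y hy) huz le_rfl
    have hle : M ≤ ({z | ∃ u ∈ M.1, u ⊓ x ≤ z}, M.2) := by
      refine ⟨fun t ht => ⟨t, ht, inf_le_left⟩, le_rfl⟩
    have := hMmax.eq_of_le hext hle
    have hxmem : x ∈ M.1 := by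
      rw [this]
      exact ⟨⊤, hF1.1, le_trans (inf_le_right) le_rfl⟩
    exact hx hxmem
  have obs2 : ∀ y, y ∉ M.2 → ∃ u ∈ M.1, ∃ v ∈ M.2, ¬ φ u (v ⊓ y) := by
    intro y hy
    by_contra hno
    push_neg at hno
    have hext : ((M.1, {z | ∃ v ∈ M.2, v ⊓ y ≤ z}) : Set α × Set β) ∈ S := by
      refine ⟨hF1, ⟨⟨⊤, hF2.1, le_top⟩, ?_, ?_⟩, ?_⟩
      · rintro z w ⟨v, hv, hvz⟩ hzw
        exact ⟨v, hv, le_trans hvz hzw⟩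
      · rintro z w ⟨v, hv, hvz⟩ ⟨v', hv', hv'w⟩
        exact ⟨v ⊓ v', hF2.2.2 _ _ hv hv',
          le_inf (le_trans (inf_le_inf inf_le_left le_rfl) hvz)
            (le_trans (inf_le_inf inf_le_right le_rfl) hv'w)⟩
      · rintro x hx z ⟨v, hv, hvz⟩
        exact hm (hno x hx v hv) le_rfl hvz
    have hle : M ≤ (M.1, {z | ∃ v ∈ M.2, v ⊓ y ≤ z}) :=
      ⟨le_rfl, fun t ht => ⟨t, ht, inf_le_left⟩⟩
    have heq := hMmax.eq_of_le hext hle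
    have hymem : y ∈ M.2 := by
      rw [heq]
      exact ⟨⊤, hF2.1, le_trans inf_le_right le_rfl⟩
    exact hy hymem
  have hbot1 : (⊥ : α) ∉ M.1 := fun h => hb1 b (hcond _ h _ hbM)
  have hbot2 : (⊥ : β) ∉ M.2 := fun h => hb2 a (hcond _ haM _ h)
  have hprime1 : ∀ x y : α, x ⊔ y ∈ M.1 → x ∈ M.1 ∨ y ∈ M.1 := by
    intro x y hxy
    by_contra hno
    push_neg at hno
    obtain ⟨u, hu, v, hv, hφ⟩ := obs1 x hno.1
    obtain ⟨u', hu', v', hv', hφ'⟩ := obs1 y hno.2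
    set u₀ := u ⊓ u' ⊓ (x ⊔ y) with hu₀
    have hu₀M : u₀ ∈ M.1 := hF1.2.2 _ _ (hF1.2.2 _ _ hu hu') hxy
    set v₀ := v ⊓ v' with hv₀
    have hv₀M : v₀ ∈ M.2 := hF2.2.2 _ _ hv hv'
    have hcc : φ u₀ v₀ := hcond _ hu₀M _ hv₀M
    have hsplit : u₀ = (u₀ ⊓ x) ⊔ (u₀ ⊓ y) := by
      rw [← inf_sup_left]
      exact (inf_eq_left.mpr inf_le_right).symm
    rw [hsplit] at hcc
    rcases hs1 _ _ _ hcc with h | h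
    · exact hφ (hm h (inf_le_inf (le_trans inf_le_left inf_le_left) le_rfl)
        (inf_le_left))
    · exact hφ' (hm h (inf_le_inf (le_trans inf_le_left inf_le_right) le_rfl)
        (inf_le_right))
  have hprime2 : ∀ x y : β, x ⊔ y ∈ M.2 → x ∈ M.2 ∨ y ∈ M.2 := by
    intro x y hxy
    by_contra hno
    push_neg at hno
    obtain ⟨u, hu, v, hv, hφ⟩ := obs2 x hno.1
    obtain ⟨u', hu', v', hv', hφ'⟩ := obs2 y hno.2
    set v₀ := v ⊓ v' ⊓ (x ⊔ y) with hv₀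
    have hv₀M : v₀ ∈ M.2 := hF2.2.2 _ _ (hF2.2.2 _ _ hv hv') hxy
    set u₀ := u ⊓ u' with hu₀
    have hu₀M : u₀ ∈ M.1 := hF1.2.2 _ _ hu hu'
    have hcc : φ u₀ v₀ := hcond _ hu₀M _ hv₀M
    have hsplit : v₀ = (v₀ ⊓ x) ⊔ (v₀ ⊓ y) := by
      rw [← inf_sup_left]
      exact (inf_eq_left.mpr inf_le_right).symm
    rw [hsplit] at hcc
    rcases hs2 _ _ _ hcc with h | h
    · exact hφ (hm h inf_le_left
        (inf_le_inf (le_trans inf_le_left inf_le_left) le_rfl))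
    · exact hφ' (hm h inf_le_right
        (inf_le_inf (le_trans inf_le_left inf_le_right) le_rfl))
  exact ⟨M.1, M.2, haM, hbM, ⟨hF1, hbot1, hprime1⟩, ⟨hF2, hbot2, hprime2⟩,
    hcond, obs1, obs2⟩

end PairExt


section Lemmas
variable {D : Type u} [DistribLattice D] [BoundedOrder D] (E : EDC D)

open OrderDual

/-- complement of a prime filter in the dual is a prime filter -/
theorem primeFilter_compl_dual {Γd : Set Dᵒᵈ} (h : PrimeFilter Γd) :
    PrimeFilter {z : D | toDual z ∉ Γd} := by
  obtain ⟨⟨htop, hup, hmeet⟩, hbot, hprime⟩ := h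
  refine ⟨⟨hbot, ?_, ?_⟩, fun hc => hc htop, ?_⟩
  · intro z w hz hzw hw
    exact hz (hup _ _ hw hzw)
  · intro z w hz hw hc
    rcases hprime _ _ hc with h | h
    · exact hz h
    · exact hw h
  · intro z w hzw
    by_contra hno
    push_neg at hno
    obtain ⟨hz, hw⟩ := hno
    simp only [Set.mem_setOf_eq, not_not] at hz hw
    exact hzw (hmeet _ _ hz hw)

theorem lemC {a b : D} (h : E.C a b) :
    ∃ Γ Δ : Set D, PrimeFilter Γ ∧ PrimeFilter Δ ∧ Rc E Γ Δ ∧ a ∈ Γ ∧ b ∈ Δ := by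
  obtain ⟨Γ, Δ, haΓ, hbΔ, hPΓ, hPΔ, hcond, obs1, obs2⟩ :=
    pairExt E.C (fun hxy hx hy => E.c2 _ _ _ _ hxy hx hy)
      (fun p q y hpq => (E.c3 y p q (E.c4 _ _ hpq)).imp (E.c4 _ _) (E.c4 _ _))
      (fun x p q hpq => E.c3 x p q hpq)
      (fun y hy => (E.c1 _ _ hy).1 rfl)
      (fun x hx => (E.c1 _ _ hx).2 rfl) h
  refine ⟨Γ, Δ, hPΓ, hPΔ, ?_, haΓ, hbΔ⟩
  intro x y
  refine ⟨fun hx hy => hcond _ hx _ hy, ?_, ?_, ?_⟩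
  · intro hx hy
    obtain ⟨u, hu, v, hv, hφ⟩ := obs1 x hx
    obtain ⟨u', hu', v', hv', hφ'⟩ := obs2 y hy
    have h1 : ¬ E.C (u ⊓ u') ((v ⊓ v') ⊓ y) := fun hc =>
      hφ' (E.c2 _ _ _ _ hc inf_le_right (inf_le_inf inf_le_right le_rfl))
    have h2 : E.C (u ⊓ u') (v ⊓ v') :=
      hcond _ (hPΓ.1.2.2 _ _ hu hu') _ (hPΔ.1.2.2 _ _ hv hv')
    have h3 : ¬ E.C ((u ⊓ u') ⊓ x) (v ⊓ v') := fun hc =>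
      hφ (E.c2 _ _ _ _ hc (inf_le_inf inf_le_left le_rfl) inf_le_left)
    exact E.mc2 _ _ _ _ h1 h2 h3
  · intro hx hy hLl
    obtain ⟨u, hu, v, hv, hφ⟩ := obs2 y hy
    have h1 : E.C (u ⊓ x) v := hcond _ (hPΓ.1.2.2 _ _ hu hx) _ hv
    have h2 : E.Ll (u ⊓ x) y := E.ll4 _ _ _ _ inf_le_right hLl le_rfl
    exact hφ (E.c2 _ _ _ _ (E.mc1 _ _ _ h1 h2) inf_le_left le_rfl)
  · intro hx hy hLl
    obtain ⟨u, hu, v, hv, hφ⟩ := obs1 x hx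
    have h1 : E.C (v ⊓ y) u := E.c4 _ _ (hcond _ hu _ (hPΔ.1.2.2 _ _ hv hy))
    have h2 : E.Ll (v ⊓ y) x := E.ll4 _ _ _ _ inf_le_right hLl le_rfl
    exact hφ (E.c2 _ _ _ _ (E.c4 _ _ (E.mc1 _ _ _ h1 h2)) le_rfl inf_le_left)

theorem lemCd {a b : D} (h : E.Cd a b) :
    ∃ Γ Δ : Set D, PrimeFilter Γ ∧ PrimeFilter Δ ∧ Rc E Γ Δ ∧ a ∉ Γ ∧ b ∉ Δ := by
  obtain ⟨Γd, Δd, haΓ, hbΔ, hPΓd, hPΔd, hcond, obs1, obs2⟩ :=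
    pairExt (α := Dᵒᵈ) (β := Dᵒᵈ) (fun x y => E.Cd (ofDual x) (ofDual y))
      (fun hxy hx hy => E.cd2 _ _ _ _ hxy hx hy)
      (fun p q y hpq => (E.cd3 (ofDual y) (ofDual p) (ofDual q)
        (E.cd4 _ _ hpq)).imp (E.cd4 _ _) (E.cd4 _ _))
      (fun x p q hpq => E.cd3 _ _ _ hpq)
      (fun y hy => (E.cd1 _ _ hy).1 rfl)
      (fun x hx => (E.cd1 _ _ hx).2 rfl) (a := toDual a) (b := toDual b) h
  refine ⟨{z : D | toDual z ∉ Γd}, {z : D | toDual z ∉ Δd},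
    primeFilter_compl_dual hPΓd, primeFilter_compl_dual hPΔd, ?_,
    by simpa using haΓ, by simpa using hbΔ⟩
  intro x y
  refine ⟨?_, ?_, ?_, ?_⟩
  · -- both in complements : use mcd2
    intro hx hy
    simp only [Set.mem_setOf_eq] at hx hy
    obtain ⟨u, hu, v, hv, hφ⟩ := obs1 (toDual x) hx
    obtain ⟨u', hu', v', hv', hφ'⟩ := obs2 (toDual y) hy
    have h1 : ¬ E.Cd (ofDual u ⊔ ofDual u') ((ofDual v ⊔ ofDual v') ⊔ y) := fun hc =>
      hφ' (E.cd2 _ _ _ _ hc le_sup_right (sup_le_sup le_sup_right le_rfl))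
    have h2 : E.Cd (ofDual u ⊔ ofDual u') (ofDual v ⊔ ofDual v') :=
      hcond _ (hPΓd.1.2.2 _ _ hu hu') _ (hPΔd.1.2.2 _ _ hv hv')
    have h3 : ¬ E.Cd ((ofDual u ⊔ ofDual u') ⊔ x) (ofDual v ⊔ ofDual v') := fun hc =>
      hφ (E.cd2 _ _ _ _ hc (sup_le_sup le_sup_left le_rfl) le_sup_left)
    exact E.mcd2 _ _ _ _ h1 h2 h3
  · intro hx hy
    simp only [Set.mem_setOf_eq, not_not] at hx hy
    exact hcond _ hx _ hy
  · intro hx hy hLl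
    simp only [Set.mem_setOf_eq, not_not] at hx hy
    obtain ⟨u, hu, v, hv, hφ⟩ := obs1 (toDual x) hx
    have h1 : E.Cd (ofDual v ⊔ y) (ofDual u) :=
      E.cd4 _ _ (hcond _ hu _ (hPΔd.1.2.2 _ _ hv hy))
    have h2 : E.Ll x (ofDual v ⊔ y) := E.ll4 _ _ _ _ le_rfl hLl le_sup_right
    have h3 := E.cd4 _ _ (E.mcd1 _ _ _ h1 h2)
    exact hφ (E.cd2 _ _ _ _ h3 le_rfl le_sup_left)
  · intro hx hy hLl
    simp only [Set.mem_setOf_eq, not_not] at hx hy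
    obtain ⟨u, hu, v, hv, hφ⟩ := obs2 (toDual y) hy
    have h1 : E.Cd (ofDual u ⊔ x) (ofDual v) := hcond _ (hPΓd.1.2.2 _ _ hu hx) _ hv
    have h2 : E.Ll y (ofDual u ⊔ x) := E.ll4 _ _ _ _ le_rfl hLl le_sup_right
    have h3 := E.mcd1 _ _ _ h1 h2
    exact hφ (E.cd2 _ _ _ _ h3 le_sup_left le_rfl)

theorem lemLl {a b : D} (h : ¬ E.Ll a b) :
    ∃ Γ Δ : Set D, PrimeFilter Γ ∧ PrimeFilter Δ ∧ Rc E Γ Δ ∧ a ∈ Γ ∧ b ∉ Δ := by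
  obtain ⟨Γ, Δd, haΓ, hbΔ, hPΓ, hPΔd, hcond, obs1, obs2⟩ :=
    pairExt (α := D) (β := Dᵒᵈ) (fun x y => ¬ E.Ll x (ofDual y))
      (fun hxy hx hy hc => hxy (E.ll4 _ _ _ _ hx hc hy))
      (fun p q y hpq => by
        by_contra hno
        push_neg at hno
        exact hpq (E.ll5 _ _ _ hno.1 hno.2))
      (fun x p q hpq => by
        by_contra hno
        push_neg at hno
        exact hpq (E.ll6 _ _ _ hno.1 hno.2))
      (fun y hy => hy (E.ll4 _ _ _ _ le_rfl E.ll1 bot_le))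
      (fun x hx => hx (E.ll4 _ _ _ _ le_top E.ll2 le_rfl))
      (a := a) (b := toDual b) h
  refine ⟨Γ, {z : D | toDual z ∉ Δd}, hPΓ, primeFilter_compl_dual hPΔd, ?_,
    haΓ, by simpa using hbΔ⟩
  intro x y
  refine ⟨?_, ?_, ?_, ?_⟩
  · intro hx hy
    simp only [Set.mem_setOf_eq] at hy
    obtain ⟨u, hu, v, hv, hφ⟩ := obs2 (toDual y) hy
    have hll : E.Ll (u ⊓ x) (ofDual v ⊔ y) :=
      E.ll4 _ _ _ _ inf_le_left (not_not.mp hφ) le_rfl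
    have hn : ¬ E.Ll (u ⊓ x) (ofDual v) := hcond _ (hPΓ.1.2.2 _ _ hu hx) _ hv
    by_contra hC
    have hnc : ¬ E.C y (u ⊓ x) := fun hc =>
      hC (E.c4 _ _ (E.c2 _ _ _ _ hc le_rfl inf_le_right))
    have : E.Ll (u ⊓ x) (y ⊔ ofDual v) := by rwa [sup_comm] at hll
    exact hn (E.mll2 _ _ _ hnc this)
  · intro hx hy
    simp only [Set.mem_setOf_eq, not_not] at hy
    obtain ⟨u, hu, v, hv, hφ⟩ := obs1 x hx
    have hll : E.Ll (u ⊓ x) (ofDual v ⊔ y) :=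
      E.ll4 _ _ _ _ le_rfl (not_not.mp hφ) le_sup_left
    have hn : ¬ E.Ll u (ofDual v ⊔ y) := hcond _ hu _ (hPΔd.1.2.2 _ _ hv hy)
    by_contra hCd
    have hncd : ¬ E.Cd x (ofDual v ⊔ y) := fun hc =>
      hCd (E.cd2 _ _ _ _ hc le_rfl le_sup_right)
    have : E.Ll (x ⊓ u) (ofDual v ⊔ y) := by rwa [inf_comm] at hll
    exact hn (E.mll1 _ _ _ hncd this)
  · intro hx hy
    simp only [Set.mem_setOf_eq, not_not] at hy
    exact hcond _ hx _ hy
  · intro hx hy hLl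
    simp only [Set.mem_setOf_eq] at hy
    obtain ⟨u, hu, v, hv, hφ⟩ := obs1 x hx
    obtain ⟨u₂, hu₂, v₂, hv₂, hφ₂⟩ := obs2 (toDual y) hy
    have hU : u ⊓ u₂ ∈ Γ := hPΓ.1.2.2 _ _ hu hu₂
    have hV : v ⊓ v₂ ∈ Δd := hPΔd.1.2.2 _ _ hv hv₂
    have h1 : E.Ll ((u ⊓ u₂) ⊓ x) (ofDual v ⊔ ofDual v₂) :=
      E.ll4 _ _ _ _ (inf_le_inf inf_le_left le_rfl) (not_not.mp hφ) le_sup_left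
    have h2 : E.Ll (u ⊓ u₂) ((ofDual v ⊔ ofDual v₂) ⊔ y) :=
      E.ll4 _ _ _ _ inf_le_right (not_not.mp hφ₂)
        (sup_le_sup le_sup_right le_rfl)
    have hn : ¬ E.Ll (u ⊓ u₂) (ofDual v ⊔ ofDual v₂) := hcond _ hU _ hV
    have h1' : E.Ll (x ⊓ (u ⊓ u₂)) (ofDual v ⊔ ofDual v₂) := by rwa [inf_comm] at h1
    have h2' : E.Ll (u ⊓ u₂) (y ⊔ (ofDual v ⊔ ofDual v₂)) := by rwa [sup_comm] at h2
    exact hn (E.ll7 _ _ _ _ hLl h1' h2')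

theorem lemSep {a b : D} (h : ¬ a ≤ b) : ∃ Γ : Set D, PrimeFilter Γ ∧ a ∈ Γ ∧ b ∉ Γ := by
  obtain ⟨Γ, Δd, haΓ, hbΔ, hPΓ, hPΔd, hcond, obs1, obs2⟩ :=
    pairExt (α := D) (β := Dᵒᵈ) (fun x y => ¬ x ≤ ofDual y)
      (fun hxy hx hy hc => hxy (le_trans hx (le_trans hc hy)))
      (fun p q y hpq => by
        by_contra hno
        push_neg at hno
        exact hpq (sup_le hno.1 hno.2))
      (fun x p q hpq => by
        by_contra hno
        push_neg at hno
        exact hpq (le_inf hno.1 hno.2))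
      (fun y hy => hy bot_le)
      (fun x hx => hx le_top)
      (a := a) (b := toDual b) h
  exact ⟨Γ, hPΓ, haΓ, fun hb => hcond _ hb _ hbΔ le_rfl⟩

theorem rcRefl {Γ : Set D} (h : PrimeFilter Γ) : Rc E Γ Γ := by
  intro x y
  refine ⟨?_, ?_, ?_, ?_⟩
  · intro hx hy
    refine E.c5 _ _ (fun hbot => h.2.1 ?_)
    rw [← hbot]
    exact h.1.2.2 _ _ hx hy
  · intro hx hy
    refine E.cd5 _ _ (fun htop => ?_)
    rcases h.2.2 x y (htop ▸ h.1.1) with hc | hc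
    · exact hx hc
    · exact hy hc
  · intro hx hy hLl
    exact hy (h.1.2.1 _ _ hx (E.ll3 _ _ hLl))
  · intro hx hy hLl
    exact hx (h.1.2.1 _ _ hy (E.ll3 _ _ hLl))

end Lemmas

section Rep
variable {D : Type u} [DistribLattice D] [BoundedOrder D] (E : EDC D)

def Pt : Type u := {p : Set D × Set D // PrimeFilter p.1 ∧ PrimeFilter p.2 ∧ Rc E p.1 p.2}

def dd1 (p : Pt E) : Pt E := ⟨(p.1.1, p.1.1), ⟨p.2.1, p.2.1, rcRefl E p.2.1⟩⟩
def dd2 (p : Pt E) : Pt E := ⟨(p.1.2, p.1.2), ⟨p.2.2.1, p.2.2.1, rcRefl E p.2.2.1⟩⟩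

def ptTop : TopologicalSpace (Pt E) where
  IsOpen U := ∀ p ∈ U, dd1 E p ∈ U ∧ dd2 E p ∈ U
  isOpen_univ := fun p _ => ⟨trivial, trivial⟩
  isOpen_inter := fun U V hU hV p hp =>
    ⟨⟨(hU p hp.1).1, (hV p hp.2).1⟩, ⟨(hU p hp.1).2, (hV p hp.2).2⟩⟩
  isOpen_sUnion := fun S hS p hp => by
    obtain ⟨U, hU, hpU⟩ := hp
    exact ⟨⟨U, hU, (hS U hU p hpU).1⟩, ⟨U, hU, (hS U hU p hpU).2⟩⟩

theorem dd1_dd1 (p : Pt E) : dd1 E (dd1 E p) = dd1 E p := rfl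
theorem dd2_dd1 (p : Pt E) : dd2 E (dd1 E p) = dd1 E p := rfl
theorem dd1_dd2 (p : Pt E) : dd1 E (dd2 E p) = dd2 E p := rfl
theorem dd2_dd2 (p : Pt E) : dd2 E (dd2 E p) = dd2 E p := rfl

theorem interior_eq (A : Set (Pt E)) :
    @interior _ (ptTop E) A = {p | p ∈ A ∧ dd1 E p ∈ A ∧ dd2 E p ∈ A} := by
  letI := ptTop E
  apply subset_antisymm
  · intro p hp
    have hop : IsOpen (interior A) := isOpen_interior
    exact ⟨interior_subset hp, interior_subset (hop p hp).1, interior_subset (hop p hp).2⟩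
  · apply interior_maximal
    · intro p hp
      exact hp.1
    · intro p hp
      refine ⟨⟨hp.2.1, ?_, ?_⟩, ⟨hp.2.2, ?_, ?_⟩⟩
      · rw [dd1_dd1]; exact hp.2.1
      · rw [dd2_dd1]; exact hp.2.1
      · rw [dd1_dd2]; exact hp.2.2
      · rw [dd2_dd2]; exact hp.2.2

theorem closure_eq (A : Set (Pt E)) :
    @closure _ (ptTop E) A = {p | p ∈ A ∨ dd1 E p ∈ A ∨ dd2 E p ∈ A} := by
  letI := ptTop E
  rw [closure_eq_compl_interior_compl, interior_eq]
  ext p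
  simp only [Set.mem_compl_iff, Set.mem_setOf_eq]
  tauto

def hmap (a : D) : Set (Pt E) := {p | a ∈ p.1.1 ∨ a ∈ p.1.2}

theorem mem_inf_filter {Γ : Set D} (h : PrimeFilter Γ) {a b : D} :
    a ⊓ b ∈ Γ ↔ a ∈ Γ ∧ b ∈ Γ :=
  ⟨fun hm => ⟨h.1.2.1 _ _ hm inf_le_left, h.1.2.1 _ _ hm inf_le_right⟩,
   fun hm => h.1.2.2 _ _ hm.1 hm.2⟩

theorem mem_sup_filter {Γ : Set D} (h : PrimeFilter Γ) {a b : D} :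
    a ⊔ b ∈ Γ ↔ a ∈ Γ ∨ b ∈ Γ :=
  ⟨h.2.2 a b, fun hm => hm.elim (fun hx => h.1.2.1 _ _ hx le_sup_left)
    (fun hx => h.1.2.1 _ _ hx le_sup_right)⟩

theorem int_hmap_inter (a b : D) :
    @interior _ (ptTop E) (hmap E a ∩ hmap E b) =
      {p : Pt E | a ⊓ b ∈ p.1.1 ∧ a ⊓ b ∈ p.1.2} := by
  rw [interior_eq]
  ext p
  simp only [Set.mem_setOf_eq, Set.mem_inter_iff, hmap,
    mem_inf_filter p.2.1, mem_inf_filter p.2.2.1]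
  simp only [dd1, dd2]
  tauto

theorem int_hmap (a : D) :
    @interior _ (ptTop E) (hmap E a) = {p : Pt E | a ∈ p.1.1 ∧ a ∈ p.1.2} := by
  have := int_hmap_inter E a a
  rw [Set.inter_self, inf_idem] at this
  exact this

end Rep

/-- topological representation theorem for EDC-lattices. -/
theorem stmt15 {D : Type u} [DistribLattice D] [BoundedOrder D] (E : EDC D) :
    ∃ (X : Type u) (_ : TopologicalSpace X) (h : D → Set X),
      (∀ a : D, closure (interior (h a)) = h a) ∧
      Function.Injective h ∧
      h ⊥ = ∅ ∧ h ⊤ = Set.univ ∧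
      (∀ a b : D, h (a ⊔ b) = h a ∪ h b) ∧
      (∀ a b : D, h (a ⊓ b) = closure (interior (h a ∩ h b))) ∧
      (∀ a b : D, a ≤ b ↔ h a ⊆ h b) ∧
      (∀ a b : D, E.C a b ↔ h a ∩ h b ≠ ∅) ∧
      (∀ a b : D, E.Cd a b ↔ interior (h a) ∪ interior (h b) ≠ Set.univ) ∧
      (∀ a b : D, E.Ll a b ↔ h a ⊆ interior (h b)) := by
  classical
  letI : TopologicalSpace (Pt E) := ptTop E
  refine ⟨Pt E, ptTop E, hmap E, ?_, ?_, ?_, ?_, ?_, ?_, ?_, ?_, ?_, ?_⟩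
  case _ => -- regular closed
    intro a
    rw [int_hmap, closure_eq]
    ext p
    simp only [Set.mem_setOf_eq, hmap]
    simp only [dd1, dd2]
    tauto
  case _ => -- injective (uses the order characterization, proved below inline)
    have hord : ∀ a b : D, a ≤ b → hmap E a ⊆ hmap E b := by
      intro a b hab p hp
      exact hp.imp (fun hx => p.2.1.1.2.1 _ _ hx hab)
        (fun hx => p.2.2.1.1.2.1 _ _ hx hab)
    have hrefl : ∀ a b : D, hmap E a ⊆ hmap E b → a ≤ b := by
      intro a b hsub
      by_contra hnab
      obtain ⟨Γ, hPΓ, haΓ, hbΓ⟩ := lemSep hnab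
      have hp : (⟨(Γ, Γ), hPΓ, hPΓ, rcRefl E hPΓ⟩ : Pt E) ∈ hmap E a := Or.inl haΓ
      rcases hsub hp with hc | hc
      · exact hbΓ hc
      · exact hbΓ hc
    intro a b hab
    exact le_antisymm (hrefl a b (hab ▸ subset_rfl)) (hrefl b a (hab ▸ subset_rfl))
  case _ => -- bottom
    ext p
    simp only [hmap, Set.mem_setOf_eq, Set.mem_empty_iff_false, iff_false]
    rintro (hc | hc)
    · exact p.2.1.2.1 hc
    · exact p.2.2.1.2.1 hc
  case _ => -- top
    ext p
    simp only [hmap, Set.mem_setOf_eq, Set.mem_univ, iff_true]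
    exact Or.inl p.2.1.1.1
  case _ => -- join
    intro a b
    ext p
    simp only [hmap, Set.mem_setOf_eq, Set.mem_union,
      mem_sup_filter p.2.1, mem_sup_filter p.2.2.1]
    tauto
  case _ => -- meet
    intro a b
    rw [int_hmap_inter, closure_eq]
    ext p
    simp only [hmap, Set.mem_setOf_eq,
      mem_inf_filter p.2.1, mem_inf_filter p.2.2.1]
    simp only [dd1, dd2, mem_inf_filter p.2.1, mem_inf_filter p.2.2.1]
    tauto
  case _ => -- order
    intro a b
    constructor
    · intro hab p hp
      exact hp.imp (fun hx => p.2.1.1.2.1 _ _ hx hab)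
        (fun hx => p.2.2.1.1.2.1 _ _ hx hab)
    · intro hsub
      by_contra hnab
      obtain ⟨Γ, hPΓ, haΓ, hbΓ⟩ := lemSep hnab
      have hp : (⟨(Γ, Γ), hPΓ, hPΓ, rcRefl E hPΓ⟩ : Pt E) ∈ hmap E a := Or.inl haΓ
      rcases hsub hp with hc | hc
      · exact hbΓ hc
      · exact hbΓ hc
  case _ => -- contact
    intro a b
    rw [← Set.nonempty_iff_ne_empty]
    constructor
    · intro hC
      obtain ⟨Γ, Δ, hPΓ, hPΔ, hRc, haΓ, hbΔ⟩ := lemC E hC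
      exact ⟨⟨(Γ, Δ), hPΓ, hPΔ, hRc⟩, Or.inl haΓ, Or.inr hbΔ⟩
    · rintro ⟨p, hpa, hpb⟩
      have c5Γ : ∀ {Γ : Set D}, PrimeFilter Γ → a ∈ Γ → b ∈ Γ → E.C a b := by
        intro Γ hP ha hb
        refine E.c5 _ _ (fun h0 => hP.2.1 ?_)
        rw [← h0]
        exact hP.1.2.2 _ _ ha hb
      rcases hpa with ha | ha <;> rcases hpb with hb | hb
      · exact c5Γ p.2.1 ha hb
      · exact (p.2.2.2 a b).1 ha hb
      · exact E.c4 _ _ ((p.2.2.2 b a).1 hb ha)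
      · exact c5Γ p.2.2.1 ha hb
  case _ => -- dual contact
    intro a b
    constructor
    · intro hCd huniv
      obtain ⟨Γ, Δ, hPΓ, hPΔ, hRc, haΓ, hbΔ⟩ := lemCd E hCd
      have hp := (Set.mem_union _ _ _).mp
        (Set.eq_univ_iff_forall.mp huniv ⟨(Γ, Δ), hPΓ, hPΔ, hRc⟩)
      rw [int_hmap, int_hmap] at hp
      rcases hp with hc | hc
      · exact haΓ hc.1
      · exact hbΔ hc.2
    · intro hne
      have : ∃ p : Pt E, p ∉ interior (hmap E a) ∪ interior (hmap E b) := by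
        by_contra hno
        push_neg at hno
        exact hne (Set.eq_univ_iff_forall.mpr hno)
      obtain ⟨p, hp⟩ := this
      rw [Set.mem_union, int_hmap, int_hmap] at hp
      push_neg at hp
      simp only [Set.mem_setOf_eq, not_and_or] at hp
      have cd5Γ : ∀ {Γ : Set D}, PrimeFilter Γ → a ∉ Γ → b ∉ Γ → E.Cd a b := by
        intro Γ hP ha hb
        refine E.cd5 _ _ (fun h0 => ?_)
        rcases hP.2.2 a b (h0 ▸ hP.1.1) with hc | hc
        · exact ha hc
        · exact hb hc
      rcases hp.1 with ha | ha <;> rcases hp.2 with hb | hb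
      · exact cd5Γ p.2.1 ha hb
      · exact (p.2.2.2 a b).2.1 ha hb
      · exact E.cd4 _ _ ((p.2.2.2 b a).2.1 hb ha)
      · exact cd5Γ p.2.2.1 ha hb
  case _ => -- Ll
    intro a b
    rw [int_hmap]
    constructor
    · intro hLl p hp
      have hab : a ≤ b := E.ll3 _ _ hLl
      rcases hp with ha | ha
      · refine ⟨p.2.1.1.2.1 _ _ ha hab, ?_⟩
        by_contra hbΔ
        exact (p.2.2.2 a b).2.2.1 ha hbΔ hLl
      · refine ⟨?_, p.2.2.1.1.2.1 _ _ ha hab⟩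
        by_contra hbΓ
        exact (p.2.2.2 b a).2.2.2 hbΓ ha hLl
    · intro hsub
      by_contra hnLl
      obtain ⟨Γ, Δ, hPΓ, hPΔ, hRc, haΓ, hbΔ⟩ := lemLl E hnLl
      have hmem : (⟨(Γ, Δ), hPΓ, hPΔ, hRc⟩ : Pt E) ∈ hmap E a := Or.inl haΓ
      exact hbΔ (hsub hmem).2
end
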